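/- arXiv:0808.1657 — 2 statements merged into one kernel-verified Lean document; each statement's English description precedes it below -/
import Mathlib

section
/- There is an algorithm that, given an integer k ≥ 2, a DFAO M generating a k-automatic sequence a = (a_n)_{n≥0}, and a rational number r > 1, decides whether a avoids r-powers; similarly it is decidable whether a avoids r^+-powers. -/
/-- Run an encoded DFAO transition table from state `q` on a list of base-`k`
digits, least significant digit first (this is `w^R` for a most-significant-first
representation `w`). -/
def dfaoRun (trans : List (List ℕ)) : ℕ → List ℕ → ℕ
  | q, [] => q
  | q, d :: ds => dfaoRun trans ((trans.getD q []).getD d 0) ds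

/-- The encoded DFAO `(trans, q0, out)` over input alphabet `Σ_k = {0,…,k-1}`
generates the sequence `a`: for every `m` and every base-`k` representation `w`
of `m` (given least significant digit first, possibly with trailing zeros,
all digits `< k`), the output on `w` is `a m`. -/
def dfaoGenerates (k : ℕ) (trans : List (List ℕ)) (q0 : ℕ) (out : List ℕ)
    (a : ℕ → ℕ) : Prop :=
  ∀ (m : ℕ) (w : List ℕ), (∀ d ∈ w, d < k) → Nat.ofDigits k w = m →
    a m = out.getD (dfaoRun trans q0 w) 0

/-- The factor `a_i a_{i+1} ⋯ a_{i+L-1}` of the sequence `a`. -/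
def factorAt (a : ℕ → ℕ) (i L : ℕ) : List ℕ :=
  (List.range L).map fun j => a (i + j)

/-- `w` is a factor of the infinite word `a`. -/
def IsFactorOf (a : ℕ → ℕ) (w : List ℕ) : Prop :=
  ∃ i : ℕ, w = factorAt a i w.length

/-- `z` is an `r`-power `x^r` for `r = p/q` built from a word `x` of length `T`:
`z` is the shortest prefix of `x^ω` of length `≥ (p/q)·T`, i.e. `z` has length
`⌈(p/q)·T⌉`, has period `T`, and `x` is its prefix of length `T`. -/
def IsRPowerOf (p q T : ℕ) (z : List ℕ) : Prop :=
  1 ≤ T ∧ T ≤ z.length ∧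
    (∀ j : ℕ, j + T < z.length → z.getD j 0 = z.getD (j + T) 0) ∧
    p * T ≤ q * z.length ∧ q * (z.length - 1) < p * T

/-- `z` is an `r⁺`-power for `r = p/q` built from a word `x` of length `T`:
`z` is the shortest prefix of `x^ω` of length `> (p/q)·T`. -/
def IsRPlusPowerOf (p q T : ℕ) (z : List ℕ) : Prop :=
  1 ≤ T ∧ T ≤ z.length ∧
    (∀ j : ℕ, j + T < z.length → z.getD j 0 = z.getD (j + T) 0) ∧
    p * T < q * z.length ∧ q * (z.length - 1) ≤ p * T

/-- `z` is an `r`-power for `r = p/q`. -/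
def IsRPower (p q : ℕ) (z : List ℕ) : Prop :=
  ∃ T : ℕ, IsRPowerOf p q T z

/-- `z` is an `r⁺`-power for `r = p/q`. -/
def IsRPlusPower (p q : ℕ) (z : List ℕ) : Prop :=
  ∃ T : ℕ, IsRPlusPowerOf p q T z

namespace AvoidAux

/-- maximum entry of the transition table -/
def transMax (trans : List (List ℕ)) : ℕ :=
  trans.foldr (fun l r => max (l.foldr max 0) r) 0

lemma le_foldr_max (l : List ℕ) {x : ℕ} (hx : x ∈ l) : x ≤ l.foldr max 0 := by
  induction l with
  | nil => cases hx
  | cons b l ih =>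
    rcases List.mem_cons.1 hx with h | h
    · subst h; exact le_max_left _ _
    · exact le_trans (ih h) (le_max_right _ _)

lemma foldr_le_transMax (trans : List (List ℕ)) {l : List ℕ} (hl : l ∈ trans) :
    l.foldr max 0 ≤ transMax trans := by
  induction trans with
  | nil => cases hl
  | cons b tr ih =>
    rcases List.mem_cons.1 hl with h | h
    · subst h; exact le_max_left _ _
    · exact le_trans (ih h) (le_max_right _ _)

lemma step_le_transMax (trans : List (List ℕ)) (s d : ℕ) :
    (trans.getD s []).getD d 0 ≤ transMax trans := by
  have hmem : trans.getD s [] ∈ trans ∨ trans.getD s [] = [] := by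
    by_cases h : s < trans.length
    · left; rw [List.getD_eq_getElem _ _ h]; exact List.getElem_mem h
    · right; exact List.getD_eq_default _ _ (by omega)
  rcases hmem with h | h
  · by_cases hd : d < (trans.getD s []).length
    · have hmem2 : (trans.getD s []).getD d 0 ∈ trans.getD s [] := by
        rw [List.getD_eq_getElem _ _ hd]; exact List.getElem_mem hd
      exact le_trans (le_foldr_max _ hmem2) (foldr_le_transMax _ h)
    · rw [List.getD_eq_default _ _ (by omega)]; exact Nat.zero_le _
  · rw [h]; simp

lemma dfaoRun_le (trans : List (List ℕ)) {B : ℕ} (hB : transMax trans ≤ B) :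
    ∀ (w : List ℕ) (s : ℕ), s ≤ B → dfaoRun trans s w ≤ B := by
  intro w
  induction w with
  | nil => intro s hs; exact hs
  | cons d ds ih =>
    intro s hs
    exact ih _ (le_trans (step_le_transMax _ _ _) hB)

lemma dfaoRun_append (trans : List (List ℕ)) :
    ∀ (w1 w2 : List ℕ) (s : ℕ),
      dfaoRun trans s (w1 ++ w2) = dfaoRun trans (dfaoRun trans s w1) w2 := by
  intro w1
  induction w1 with
  | nil => intro w2 s; rfl
  | cons d ds ih => intro w2 s; exact ih w2 _

lemma dfaoRun_eq_foldl (trans : List (List ℕ)) :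
    ∀ (w : List ℕ) (s : ℕ),
      dfaoRun trans s w = w.foldl (fun st d => (trans.getD st []).getD d 0) s := by
  intro w
  induction w with
  | nil => intro s; rfl
  | cons d ds ih => intro s; exact ih _

/-- the `ℓ`-digit base-`k` representation of `u` (LSD first, possibly truncating). -/
def padRep (k ℓ u : ℕ) : List ℕ := (List.range ℓ).map fun e => u / k ^ e % k

lemma padRep_length (k ℓ u : ℕ) : (padRep k ℓ u).length = ℓ := by simp [padRep]

lemma padRep_succ (k ℓ u : ℕ) : padRep k (ℓ+1) u = u % k :: padRep k ℓ (u / k) := by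
  unfold padRep
  rw [List.range_succ_eq_map, List.map_cons, List.map_map]
  congr 1
  · simp
  · apply List.map_congr_left
    intro e _
    simp only [Function.comp]
    rw [pow_succ', ← Nat.div_div_eq_div_mul]

lemma padRep_digits_lt {k : ℕ} (hk : 0 < k) (ℓ u : ℕ) : ∀ d ∈ padRep k ℓ u, d < k := by
  intro d hd
  simp only [padRep, List.mem_map] at hd
  obtain ⟨e, _, rfl⟩ := hd
  exact Nat.mod_lt _ hk

lemma ofDigits_padRep {k : ℕ} (hk : 0 < k) :
    ∀ (ℓ u : ℕ), Nat.ofDigits k (padRep k ℓ u) = u % k ^ ℓ := by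
  intro ℓ
  induction ℓ with
  | zero => intro u; simp [padRep, Nat.mod_one]
  | succ ℓ ih =>
    intro u
    rw [padRep_succ, Nat.ofDigits_cons, ih]
    have h1 : u / k % k ^ ℓ = u % k ^ (ℓ+1) / k := by
      rw [pow_succ', Nat.mod_mul_right_div_self]
    have h2 : u % k ^ (ℓ+1) % k = u % k :=
      Nat.mod_mod_of_dvd _ ⟨k ^ ℓ, by rw [pow_succ']⟩
    push_cast
    calc (u % k : ℕ) + k * (u / k % k ^ ℓ)
        = u % k ^ (ℓ+1) % k + k * (u % k ^ (ℓ+1) / k) := by rw [h1, h2]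
      _ = u % k ^ (ℓ+1) := Nat.mod_add_div _ _



section Main

variable {k : ℕ} {trans : List (List ℕ)} {q0 : ℕ} {out : List ℕ} {a : ℕ → ℕ}

/-- output of the automaton started in state `s` on input `m` -/
def aFrom (k : ℕ) (trans : List (List ℕ)) (out : List ℕ) (s m : ℕ) : ℕ :=
  out.getD (dfaoRun trans s (Nat.digits k m)) 0

lemma a_split (hk : 2 ≤ k) (hgen : dfaoGenerates k trans q0 out a)
    (ℓ u m : ℕ) (hu : u < k ^ ℓ) :
    a (u + k ^ ℓ * m) = aFrom k trans out (dfaoRun trans q0 (padRep k ℓ u)) m := by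
  have hw : ∀ d ∈ padRep k ℓ u ++ Nat.digits k m, d < k := by
    intro d hd
    rcases List.mem_append.1 hd with h | h
    · exact padRep_digits_lt (by omega) _ _ _ h
    · exact Nat.digits_lt_base (by omega) h
  have hv : Nat.ofDigits k (padRep k ℓ u ++ Nat.digits k m) = u + k ^ ℓ * m := by
    rw [Nat.ofDigits_append, ofDigits_padRep (by omega), padRep_length,
      Nat.ofDigits_digits, Nat.mod_eq_of_lt hu]
  have h := hgen _ _ hw hv
  rw [h, dfaoRun_append]
  rfl

lemma a_eq_pad (hk : 2 ≤ k) (hgen : dfaoGenerates k trans q0 out a)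
    (L n : ℕ) (hn : n < k ^ L) :
    a n = out.getD (dfaoRun trans q0 (padRep k L n)) 0 := by
  have h := a_split hk hgen L n 0 hn
  simpa [aFrom, Nat.digits_zero, dfaoRun] using h

/-- The core periodicity predicate: `a` has period `T ≥ 1` on the window
`[I, I + D)` where `D` runs over all `j` with `q·j + δ ≤ c·T`. -/
def PPow (a : ℕ → ℕ) (q c δ I T : ℕ) : Prop :=
  1 ≤ T ∧ ∀ j : ℕ, q * j + δ ≤ c * T → a (I + j) = a (I + T + j)

lemma length_factorAt (a : ℕ → ℕ) (i L : ℕ) : (factorAt a i L).length = L := by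
  simp [factorAt]

lemma factorAt_getD (a : ℕ → ℕ) (i L j : ℕ) (h : j < L) :
    (factorAt a i L).getD j 0 = a (i + j) := by
  unfold factorAt
  rw [List.getD_eq_getElem?_getD, List.getElem?_map, List.getElem?_range h]
  rfl

lemma exists_rpower_iff {p q : ℕ} (hq : 1 ≤ q) (hpq : q < p) :
    (∃ z, IsFactorOf a z ∧ IsRPower p q z) ↔ ∃ I T, PPow a q (p - q) 1 I T := by
  constructor
  · rintro ⟨z, ⟨i, hz⟩, T, hT1, hTlen, hper, hle, hlt⟩
    refine ⟨i, T, hT1, fun j hj => ?_⟩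
    have hcq : (p - q) * T + q * T = p * T := by
      rw [← Nat.add_mul]; congr 1; omega
    have hqj : q * (j + T) = q * j + q * T := by ring
    have h1 : q * (j + T) < p * T := by omega
    have h2 : j + T < z.length := by
      have h3 : q * (j + T) < q * z.length := lt_of_lt_of_le h1 hle
      exact lt_of_mul_lt_mul_left h3 (Nat.zero_le q)
    have hper' := hper j h2
    rw [hz, factorAt_getD _ _ _ _ (by omega), factorAt_getD _ _ _ _ (by omega)] at hper'
    rw [hper']
    congr 1
    omega
  · rintro ⟨I, T, hT1, hper⟩
    have hpT : 1 ≤ p * T := Nat.mul_pos (by omega) hT1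
    have hdm := Nat.div_add_mod (p * T - 1) q
    have hmod := Nat.mod_lt (p * T - 1) (show 0 < q by omega)
    set D := (p * T - 1) / q with hD
    set L := D + 1 with hLdef
    have hcq : (p - q) * T + q * T = p * T := by
      rw [← Nat.add_mul]; congr 1; omega
    have hqL : q * L = q * D + q := by rw [hLdef]; ring
    have hple : p * T ≤ q * L := by omega
    have hqlt : q * (L - 1) < p * T := by
      have hLD : L - 1 = D := by rw [hLdef, Nat.add_sub_cancel]
      rw [hLD]; omega
    have hTL : T ≤ L := by
      have h5 : q * T < p * T := Nat.mul_lt_mul_of_lt_of_le hpq (le_refl T) hT1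
      have h6 : q * T < q * L := lt_of_lt_of_le h5 hple
      exact le_of_lt (lt_of_mul_lt_mul_left h6 (Nat.zero_le q))
    refine ⟨factorAt a I L, ⟨I, by rw [length_factorAt]⟩, T, hT1, ?_, ?_, ?_, ?_⟩
    · rw [length_factorAt]; exact hTL
    · intro j hj
      rw [length_factorAt] at hj
      have hjq : q * j + 1 ≤ (p - q) * T := by
        have h7 : q * (j + T) ≤ q * (L - 1) := Nat.mul_le_mul (le_refl q) (by omega)
        have h8 : q * (j + T) = q * j + q * T := by ring
        omega
      rw [factorAt_getD _ _ _ _ (by omega), factorAt_getD _ _ _ _ hj]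
      rw [hper j hjq]
      congr 1
      omega
    · rw [length_factorAt]; exact hple
    · rw [length_factorAt]; exact hqlt

lemma exists_rpluspower_iff {p q : ℕ} (hq : 1 ≤ q) (hpq : q < p) :
    (∃ z, IsFactorOf a z ∧ IsRPlusPower p q z) ↔ ∃ I T, PPow a q (p - q) 0 I T := by
  constructor
  · rintro ⟨z, ⟨i, hz⟩, T, hT1, hTlen, hper, hlt, hle⟩
    refine ⟨i, T, hT1, fun j hj => ?_⟩
    have hcq : (p - q) * T + q * T = p * T := by
      rw [← Nat.add_mul]; congr 1; omega
    have hqj : q * (j + T) = q * j + q * T := by ring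
    have h1 : q * (j + T) ≤ p * T := by omega
    have h2 : j + T < z.length := by
      have h3 : q * (j + T) < q * z.length := lt_of_le_of_lt h1 hlt
      exact lt_of_mul_lt_mul_left h3 (Nat.zero_le q)
    have hper' := hper j h2
    rw [hz, factorAt_getD _ _ _ _ (by omega), factorAt_getD _ _ _ _ (by omega)] at hper'
    rw [hper']
    congr 1
    omega
  · rintro ⟨I, T, hT1, hper⟩
    have hpT : 1 ≤ p * T := Nat.mul_pos (by omega) hT1
    have hdm := Nat.div_add_mod (p * T) q
    have hmod := Nat.mod_lt (p * T) (show 0 < q by omega)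
    set D := p * T / q with hD
    set L := D + 1 with hLdef
    have hcq : (p - q) * T + q * T = p * T := by
      rw [← Nat.add_mul]; congr 1; omega
    have hqL : q * L = q * D + q := by rw [hLdef]; ring
    have hplt : p * T < q * L := by omega
    have hqle : q * (L - 1) ≤ p * T := by
      have hLD : L - 1 = D := by rw [hLdef, Nat.add_sub_cancel]
      rw [hLD]; omega
    have hTL : T ≤ L := by
      have h5 : q * T ≤ p * T := Nat.mul_le_mul (le_of_lt hpq) (le_refl T)
      have h6 : q * T < q * L := lt_of_le_of_lt h5 hplt
      exact le_of_lt (lt_of_mul_lt_mul_left h6 (Nat.zero_le q))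
    refine ⟨factorAt a I L, ⟨I, by rw [length_factorAt]⟩, T, hT1, ?_, ?_, ?_, ?_⟩
    · rw [length_factorAt]; exact hTL
    · intro j hj
      rw [length_factorAt] at hj
      have hjq : q * j + 0 ≤ (p - q) * T := by
        have h7 : q * (j + T) ≤ q * (L - 1) := Nat.mul_le_mul (le_refl q) (by omega)
        have h8 : q * (j + T) = q * j + q * T := by ring
        omega
      rw [factorAt_getD _ _ _ _ (by omega), factorAt_getD _ _ _ _ hj]
      rw [hper j hjq]
      congr 1
      omega
    · rw [length_factorAt]; exact hplt
    · rw [length_factorAt]; exact hqle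

end Main

section Char

variable {k : ℕ} {trans : List (List ℕ)} {q0 : ℕ} {out : List ℕ} {a : ℕ → ℕ}

/-- The data determining the contribution of residue `j0` to the residual
periodicity predicate. -/
def tupOf (k : ℕ) (trans : List (List ℕ)) (q0 q c δ ℓ i t j0 : ℕ) :
    ℤ × ℕ × ℕ × ℕ × ℕ :=
  (((c : ℤ) * t - q * j0 - δ) / ((k : ℤ) ^ ℓ),
   dfaoRun trans q0 (padRep k ℓ ((i + j0) % k ^ ℓ)), (i + j0) / k ^ ℓ,
   dfaoRun trans q0 (padRep k ℓ ((i + t + j0) % k ^ ℓ)), (i + t + j0) / k ^ ℓ)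

/-- The residual condition attached to a tuple. -/
def Cond (k : ℕ) (trans : List (List ℕ)) (out : List ℕ) (q c : ℕ)
    (τ : ℤ × ℕ × ℕ × ℕ × ℕ) (iz tz : ℕ) : Prop :=
  ∀ j1 : ℕ, (q : ℤ) * j1 - (c : ℤ) * tz ≤ τ.1 →
    aFrom k trans out τ.2.1 (iz + j1 + τ.2.2.1) =
      aFrom k trans out τ.2.2.2.1 (iz + tz + j1 + τ.2.2.2.2)

lemma arith_iff {k ℓ : ℕ} (hk : 2 ≤ k) (q c δ t j0 j1 tz : ℕ) :
    (q * (j0 + k ^ ℓ * j1) + δ ≤ c * (t + k ^ ℓ * tz)) ↔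
      ((q : ℤ) * j1 - (c : ℤ) * tz ≤ ((c : ℤ) * t - q * j0 - δ) / ((k : ℤ) ^ ℓ)) := by
  have hKZ : (0 : ℤ) < (k : ℤ) ^ ℓ := by positivity
  rw [Int.le_ediv_iff_mul_le hKZ]
  constructor
  · intro h
    have h' : (q : ℤ) * (j0 + (k:ℤ) ^ ℓ * j1) + δ ≤ (c : ℤ) * (t + (k:ℤ) ^ ℓ * tz) := by
      exact_mod_cast h
    nlinarith [h']
  · intro h
    have h' : (q : ℤ) * ((j0 : ℤ) + (k:ℤ) ^ ℓ * j1) + δ ≤ (c : ℤ) * ((t : ℤ) + (k:ℤ) ^ ℓ * tz) := by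
      nlinarith [h]
    exact_mod_cast h'

lemma idxA (hk : 2 ≤ k) (hgen : dfaoGenerates k trans q0 out a)
    (ℓ i iz j0 j1 : ℕ) :
    a ((i + k ^ ℓ * iz) + (j0 + k ^ ℓ * j1)) =
      aFrom k trans out (dfaoRun trans q0 (padRep k ℓ ((i + j0) % k ^ ℓ)))
        (iz + j1 + (i + j0) / k ^ ℓ) := by
  have hkl : 0 < k ^ ℓ := pow_pos (by omega) _
  have h0 := Nat.mod_add_div (i + j0) (k ^ ℓ)
  have he : (i + k ^ ℓ * iz) + (j0 + k ^ ℓ * j1)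
      = (i + j0) % k ^ ℓ + k ^ ℓ * (iz + j1 + (i + j0) / k ^ ℓ) := by
    calc (i + k ^ ℓ * iz) + (j0 + k ^ ℓ * j1)
        = ((i + j0) % k ^ ℓ + k ^ ℓ * ((i + j0) / k ^ ℓ)) + k ^ ℓ * (iz + j1) := by
          rw [h0]; ring
      _ = (i + j0) % k ^ ℓ + k ^ ℓ * (iz + j1 + (i + j0) / k ^ ℓ) := by ring
  rw [he, a_split hk hgen ℓ _ _ (Nat.mod_lt _ hkl)]

lemma idxB (hk : 2 ≤ k) (hgen : dfaoGenerates k trans q0 out a)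
    (ℓ i t iz tz j0 j1 : ℕ) :
    a ((i + k ^ ℓ * iz) + (t + k ^ ℓ * tz) + (j0 + k ^ ℓ * j1)) =
      aFrom k trans out (dfaoRun trans q0 (padRep k ℓ ((i + t + j0) % k ^ ℓ)))
        (iz + tz + j1 + (i + t + j0) / k ^ ℓ) := by
  have hkl : 0 < k ^ ℓ := pow_pos (by omega) _
  have h0 := Nat.mod_add_div (i + t + j0) (k ^ ℓ)
  have he : (i + k ^ ℓ * iz) + (t + k ^ ℓ * tz) + (j0 + k ^ ℓ * j1)
      = (i + t + j0) % k ^ ℓ + k ^ ℓ * (iz + tz + j1 + (i + t + j0) / k ^ ℓ) := by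
    calc (i + k ^ ℓ * iz) + (t + k ^ ℓ * tz) + (j0 + k ^ ℓ * j1)
        = ((i + t + j0) % k ^ ℓ + k ^ ℓ * ((i + t + j0) / k ^ ℓ)) + k ^ ℓ * (iz + tz + j1) := by
          rw [h0]; ring
      _ = (i + t + j0) % k ^ ℓ + k ^ ℓ * (iz + tz + j1 + (i + t + j0) / k ^ ℓ) := by ring
  rw [he, a_split hk hgen ℓ _ _ (Nat.mod_lt _ hkl)]

lemma char (hk : 2 ≤ k) (hgen : dfaoGenerates k trans q0 out a)
    (q c δ ℓ i t iz tz : ℕ) :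
    PPow a q c δ (i + k ^ ℓ * iz) (t + k ^ ℓ * tz) ↔
      ((1 ≤ t ∨ 1 ≤ tz) ∧
        ∀ j0 < k ^ ℓ, Cond k trans out q c (tupOf k trans q0 q c δ ℓ i t j0) iz tz) := by
  have hkl : 0 < k ^ ℓ := pow_pos (by omega) _
  unfold PPow
  apply and_congr
  · constructor
    · intro h
      by_contra hne
      push_neg at hne
      obtain ⟨h1, h2⟩ := hne
      have ht0 : t = 0 := by omega
      have htz0 : tz = 0 := by omega
      rw [ht0, htz0] at h
      simp at h
    · rintro (h | h)
      · omega
      · have : 1 * 1 ≤ k ^ ℓ * tz := Nat.mul_le_mul hkl h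
        omega
  · constructor
    · intro h j0 hj0
      intro j1 hcnd
      have harith := (arith_iff (ℓ := ℓ) hk q c δ t j0 j1 tz).mpr hcnd
      have := h (j0 + k ^ ℓ * j1) harith
      rw [idxA hk hgen, idxB hk hgen] at this
      exact this
    · intro h j hcnd
      have h0 : j = j % k ^ ℓ + k ^ ℓ * (j / k ^ ℓ) := (Nat.mod_add_div j (k ^ ℓ)).symm
      rw [h0] at hcnd ⊢
      have harith := (arith_iff (ℓ := ℓ) hk q c δ t (j % k ^ ℓ) (j / k ^ ℓ) tz).mp hcnd
      have := h (j % k ^ ℓ) (Nat.mod_lt _ hkl) (j / k ^ ℓ) harith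
      rw [idxA hk hgen, idxB hk hgen]
      exact this

/-- The signature of `(i, t)` at representation length `ℓ`. -/
def Sig (k : ℕ) (trans : List (List ℕ)) (q0 q c δ ℓ i t : ℕ) :
    Bool × Finset (ℤ × ℕ × ℕ × ℕ × ℕ) :=
  (decide (1 ≤ t), (Finset.range (k ^ ℓ)).image (tupOf k trans q0 q c δ ℓ i t))

lemma forall_image_iff {β γ : Type*} [DecidableEq γ] (s : Finset β) (f : β → γ) (P : γ → Prop) :
    (∀ τ ∈ s.image f, P τ) ↔ ∀ x ∈ s, P (f x) := by
  constructor
  · intro h x hx; exact h _ (Finset.mem_image_of_mem _ hx)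
  · intro h τ hτ
    obtain ⟨x, hx, rfl⟩ := Finset.mem_image.1 hτ
    exact h x hx

lemma transfer (hk : 2 ≤ k) (hgen : dfaoGenerates k trans q0 out a)
    (q c δ ℓ i t ℓ' i' t' : ℕ)
    (hsig : Sig k trans q0 q c δ ℓ i t = Sig k trans q0 q c δ ℓ' i' t')
    (iz tz : ℕ) :
    PPow a q c δ (i + k ^ ℓ * iz) (t + k ^ ℓ * tz) ↔
      PPow a q c δ (i' + k ^ ℓ' * iz) (t' + k ^ ℓ' * tz) := by
  rw [char hk hgen, char hk hgen]
  unfold Sig at hsig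
  rw [Prod.mk.injEq] at hsig
  obtain ⟨h1, h2⟩ := hsig
  have hb : (1 ≤ t) ↔ (1 ≤ t') := decide_eq_decide.mp h1
  apply and_congr (or_congr hb Iff.rfl)
  have e1 : (∀ j0 < k ^ ℓ, Cond k trans out q c (tupOf k trans q0 q c δ ℓ i t j0) iz tz)
      ↔ ∀ τ ∈ (Finset.range (k ^ ℓ)).image (tupOf k trans q0 q c δ ℓ i t),
          Cond k trans out q c τ iz tz := by
    rw [forall_image_iff]
    exact ⟨fun h x hx => h x (Finset.mem_range.1 hx), fun h x hx => h x (Finset.mem_range.2 hx)⟩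
  have e2 : (∀ j0 < k ^ ℓ', Cond k trans out q c (tupOf k trans q0 q c δ ℓ' i' t' j0) iz tz)
      ↔ ∀ τ ∈ (Finset.range (k ^ ℓ')).image (tupOf k trans q0 q c δ ℓ' i' t'),
          Cond k trans out q c τ iz tz := by
    rw [forall_image_iff]
    exact ⟨fun h x hx => h x (Finset.mem_range.1 hx), fun h x hx => h x (Finset.mem_range.2 hx)⟩
  rw [e1, e2, h2]

end Char

section Pump

variable {k : ℕ} {trans : List (List ℕ)} {q0 : ℕ} {out : List ℕ} {a : ℕ → ℕ}

/-- finite universe containing all tuples -/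
noncomputable def TupU (q c B0 : ℕ) : Finset (ℤ × ℕ × ℕ × ℕ × ℕ) :=
  Finset.Icc (-(q : ℤ) - 1) (c : ℤ) ×ˢ Finset.range (B0 + 1) ×ˢ Finset.range 2 ×ˢ
    Finset.range (B0 + 1) ×ˢ Finset.range 3

lemma tupOf_mem (hk : 2 ≤ k) {q c δ ℓ i t j0 : ℕ} (hδ : δ ≤ 1)
    (hi : i < k ^ ℓ) (ht : t < k ^ ℓ) (hj0 : j0 < k ^ ℓ) :
    tupOf k trans q0 q c δ ℓ i t j0 ∈ TupU q c (max q0 (transMax trans)) := by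
  have hkl : 0 < k ^ ℓ := pow_pos (by omega) _
  have hKZ : (0 : ℤ) < (k : ℤ) ^ ℓ := by positivity
  simp only [TupU, tupOf, Finset.mem_product, Finset.mem_Icc, Finset.mem_range]
  refine ⟨⟨?_, ?_⟩, ?_, ?_, ?_, ?_⟩
  · rw [Int.le_ediv_iff_mul_le hKZ]
    have h1 : (j0 : ℤ) ≤ (k : ℤ) ^ ℓ - 1 := by
      have : (j0 : ℤ) < (k : ℤ) ^ ℓ := by exact_mod_cast hj0
      omega
    have h2 : (q : ℤ) * j0 ≤ (q : ℤ) * ((k : ℤ) ^ ℓ - 1) :=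
      mul_le_mul_of_nonneg_left h1 (by positivity)
    have h3 : (0 : ℤ) ≤ (c : ℤ) * t := by positivity
    have h4 : (δ : ℤ) ≤ 1 := by exact_mod_cast hδ
    nlinarith [hKZ]
  · have h5 : (c : ℤ) * t - q * j0 - δ ≤ (c : ℤ) * (k : ℤ) ^ ℓ := by
      have ht' : (t : ℤ) ≤ (k : ℤ) ^ ℓ := by exact_mod_cast le_of_lt ht
      have : (c : ℤ) * t ≤ (c : ℤ) * (k : ℤ) ^ ℓ := mul_le_mul_of_nonneg_left ht' (by positivity)
      have hq0 : (0 : ℤ) ≤ (q : ℤ) * j0 := by positivity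
      have hd0 : (0 : ℤ) ≤ (δ : ℤ) := by positivity
      omega
    calc ((c : ℤ) * t - q * j0 - δ) / (k : ℤ) ^ ℓ
        ≤ ((c : ℤ) * (k : ℤ) ^ ℓ) / (k : ℤ) ^ ℓ := Int.ediv_le_ediv hKZ h5
      _ = (c : ℤ) := Int.mul_ediv_cancel _ (ne_of_gt hKZ)
  · have := dfaoRun_le trans (le_max_right q0 (transMax trans))
      (padRep k ℓ ((i + j0) % k ^ ℓ)) q0 (le_max_left _ _)
    omega
  · rw [Nat.div_lt_iff_lt_mul hkl]
    omega
  · have := dfaoRun_le trans (le_max_right q0 (transMax trans))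
      (padRep k ℓ ((i + t + j0) % k ^ ℓ)) q0 (le_max_left _ _)
    omega
  · rw [Nat.div_lt_iff_lt_mul hkl]
    omega

lemma sig_mem (hk : 2 ≤ k) {q c δ ℓ i t : ℕ} (hδ : δ ≤ 1)
    (hi : i < k ^ ℓ) (ht : t < k ^ ℓ) :
    Sig k trans q0 q c δ ℓ i t ∈
      ({false, true} : Finset Bool) ×ˢ (TupU q c (max q0 (transMax trans))).powerset := by
  rw [Finset.mem_product]
  constructor
  · rcases Bool.dichotomy (decide (1 ≤ t)) with h | h <;> simp [Sig, h]
  · rw [Finset.mem_powerset]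
    intro τ hτ
    obtain ⟨j0, hj0, rfl⟩ := Finset.mem_image.1 hτ
    exact tupOf_mem hk hδ hi ht (Finset.mem_range.1 hj0)

lemma card_W (q c B0 : ℕ) :
    (({false, true} : Finset Bool) ×ˢ (TupU q c B0).powerset).card
      = 2 * 2 ^ ((q + c + 2) * ((B0 + 1) * (2 * ((B0 + 1) * 3)))) := by
  rw [Finset.card_product, Finset.card_powerset]
  have hbb : ({false, true} : Finset Bool).card = 2 := rfl
  rw [hbb]
  congr 2
  unfold TupU
  rw [Finset.card_product, Finset.card_product, Finset.card_product, Finset.card_product,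
    Int.card_Icc, Finset.card_range, Finset.card_range, Finset.card_range]
  have : ((c : ℤ) + 1 - (-(q : ℤ) - 1)).toNat = q + c + 2 := by omega
  rw [this]

lemma shrink (hk : 2 ≤ k) (hgen : dfaoGenerates k trans q0 out a)
    {q c δ : ℕ} (hδ : δ ≤ 1) :
    (∃ I T, PPow a q c δ I T) →
      ∃ I T, I < k ^ (({false, true} : Finset Bool) ×ˢ
          (TupU q c (max q0 (transMax trans))).powerset).card ∧
        T < k ^ (({false, true} : Finset Bool) ×ˢ
          (TupU q c (max q0 (transMax trans))).powerset).card ∧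
        PPow a q c δ I T := by
  set W := ({false, true} : Finset Bool) ×ˢ (TupU q c (max q0 (transMax trans))).powerset with hW
  set NB := W.card with hNB
  have aux : ∀ ℓ : ℕ, ∀ I T, I < k ^ ℓ → T < k ^ ℓ → PPow a q c δ I T →
      ∃ I' T', I' < k ^ NB ∧ T' < k ^ NB ∧ PPow a q c δ I' T' := by
    intro ℓ
    induction ℓ using Nat.strong_induction_on with
    | _ ℓ IH =>
      intro I T hI hT hP
      by_cases hle : ℓ ≤ NB
      · exact ⟨I, T, lt_of_lt_of_le hI (Nat.pow_le_pow_right (by omega) hle),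
          lt_of_lt_of_le hT (Nat.pow_le_pow_right (by omega) hle), hP⟩
      · push_neg at hle
        have hmaps : ∀ m : Fin (ℓ + 1),
            Sig k trans q0 q c δ (m : ℕ) (I % k ^ (m : ℕ)) (T % k ^ (m : ℕ)) ∈ W :=
          fun m => sig_mem hk hδ (Nat.mod_lt _ (pow_pos (by omega) _))
            (Nat.mod_lt _ (pow_pos (by omega) _))
        have hcard : W.card < (Finset.univ : Finset (Fin (ℓ + 1))).card := by
          rw [Finset.card_univ, Fintype.card_fin]
          omega
        obtain ⟨m₁, -, m₂, -, hne, heq⟩ :=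
          Finset.exists_ne_map_eq_of_card_lt_of_maps_to hcard (fun m _ => hmaps m)
        have key : ∀ m m' : Fin (ℓ + 1), (m : ℕ) < (m' : ℕ) →
            Sig k trans q0 q c δ (m : ℕ) (I % k ^ (m : ℕ)) (T % k ^ (m : ℕ)) =
              Sig k trans q0 q c δ (m' : ℕ) (I % k ^ (m' : ℕ)) (T % k ^ (m' : ℕ)) →
            ∃ I' T', I' < k ^ NB ∧ T' < k ^ NB ∧ PPow a q c δ I' T' := by
          intro m m' hmm heq2
          have hm'ℓ : (m' : ℕ) ≤ ℓ := Nat.lt_succ_iff.1 m'.2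
          have hK2 : 0 < k ^ (m' : ℕ) := pow_pos (by omega) _
          have hK1 : 0 < k ^ (m : ℕ) := pow_pos (by omega) _
          have hIdec : I = I % k ^ (m' : ℕ) + k ^ (m' : ℕ) * (I / k ^ (m' : ℕ)) :=
            (Nat.mod_add_div I _).symm
          have hTdec : T = T % k ^ (m' : ℕ) + k ^ (m' : ℕ) * (T / k ^ (m' : ℕ)) :=
            (Nat.mod_add_div T _).symm
          have hP2 : PPow a q c δ (I % k ^ (m' : ℕ) + k ^ (m' : ℕ) * (I / k ^ (m' : ℕ)))
              (T % k ^ (m' : ℕ) + k ^ (m' : ℕ) * (T / k ^ (m' : ℕ))) := by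
            rw [← hIdec, ← hTdec]; exact hP
          have hP1 : PPow a q c δ (I % k ^ (m : ℕ) + k ^ (m : ℕ) * (I / k ^ (m' : ℕ)))
              (T % k ^ (m : ℕ) + k ^ (m : ℕ) * (T / k ^ (m' : ℕ))) :=
            (transfer hk hgen q c δ (m : ℕ) (I % k ^ (m : ℕ)) (T % k ^ (m : ℕ))
              (m' : ℕ) (I % k ^ (m' : ℕ)) (T % k ^ (m' : ℕ)) heq2 _ _).mpr hP2
          have hpowsplit : k ^ ((m : ℕ) + (ℓ - (m' : ℕ))) = k ^ (m : ℕ) * k ^ (ℓ - (m' : ℕ)) :=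
            pow_add k _ _
          have hdivI : I / k ^ (m' : ℕ) < k ^ (ℓ - (m' : ℕ)) := by
            rw [Nat.div_lt_iff_lt_mul hK2]
            have hsplit : k ^ (ℓ - (m' : ℕ)) * k ^ (m' : ℕ) = k ^ ℓ := by
              rw [← pow_add]; congr 1; omega
            omega
          have hdivT : T / k ^ (m' : ℕ) < k ^ (ℓ - (m' : ℕ)) := by
            rw [Nat.div_lt_iff_lt_mul hK2]
            have hsplit : k ^ (ℓ - (m' : ℕ)) * k ^ (m' : ℕ) = k ^ ℓ := by
              rw [← pow_add]; congr 1; omega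
            omega
          have hb1 : I % k ^ (m : ℕ) + k ^ (m : ℕ) * (I / k ^ (m' : ℕ))
              < k ^ ((m : ℕ) + (ℓ - (m' : ℕ))) := by
            have h1 : I % k ^ (m : ℕ) < k ^ (m : ℕ) := Nat.mod_lt _ hK1
            have h2 : k ^ (m : ℕ) * (I / k ^ (m' : ℕ) + 1) ≤ k ^ (m : ℕ) * k ^ (ℓ - (m' : ℕ)) :=
              Nat.mul_le_mul (le_refl _) hdivI
            have h3 : k ^ (m : ℕ) * (I / k ^ (m' : ℕ) + 1)
                = k ^ (m : ℕ) * (I / k ^ (m' : ℕ)) + k ^ (m : ℕ) := by ring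
            omega
          have hb2 : T % k ^ (m : ℕ) + k ^ (m : ℕ) * (T / k ^ (m' : ℕ))
              < k ^ ((m : ℕ) + (ℓ - (m' : ℕ))) := by
            have h1 : T % k ^ (m : ℕ) < k ^ (m : ℕ) := Nat.mod_lt _ hK1
            have h2 : k ^ (m : ℕ) * (T / k ^ (m' : ℕ) + 1) ≤ k ^ (m : ℕ) * k ^ (ℓ - (m' : ℕ)) :=
              Nat.mul_le_mul (le_refl _) hdivT
            have h3 : k ^ (m : ℕ) * (T / k ^ (m' : ℕ) + 1)
                = k ^ (m : ℕ) * (T / k ^ (m' : ℕ)) + k ^ (m : ℕ) := by ring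
            omega
          exact IH ((m : ℕ) + (ℓ - (m' : ℕ))) (by omega) _ _ hb1 hb2 hP1
        rcases Ne.lt_or_gt hne with h | h
        · exact key m₁ m₂ h heq
        · exact key m₂ m₁ h heq.symm
  rintro ⟨I, T, hP⟩
  have hIT : I < k ^ (I + T) := lt_of_le_of_lt (Nat.le_add_right I T)
    (Nat.lt_pow_self (by omega))
  have hTT : T < k ^ (I + T) := lt_of_le_of_lt (Nat.le_add_left T I)
    (Nat.lt_pow_self (by omega))
  exact aux (I + T) I T hIT hTT hP

end Pump

/-- Brute-force bounded search for a witness. -/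
def searchAt (k : ℕ) (trans : List (List ℕ)) (q0 : ℕ) (out : List ℕ)
    (q c δ M L : ℕ) : Bool :=
  (List.range M).any fun I =>
    (List.range M).any fun T =>
      decide (1 ≤ T) &&
        ((List.range (c * M + 1)).all fun j =>
          !decide (q * j + δ ≤ c * T) ||
            decide (out.getD (dfaoRun trans q0 (padRep k L (I + j))) 0 =
              out.getD (dfaoRun trans q0 (padRep k L (I + T + j))) 0))

section Search

variable {k : ℕ} {trans : List (List ℕ)} {q0 : ℕ} {out : List ℕ} {a : ℕ → ℕ}

lemma searchAt_iff (hk : 2 ≤ k) (hgen : dfaoGenerates k trans q0 out a)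
    {q c δ M L : ℕ} (hq : 1 ≤ q) (hL : (c + 2) * M ≤ k ^ L) :
    searchAt k trans q0 out q c δ M L = true ↔
      ∃ I T, I < M ∧ T < M ∧ PPow a q c δ I T := by
  have hcM : (c + 2) * M = c * M + 2 * M := by ring
  have haC : ∀ n, n < k ^ L → a n = out.getD (dfaoRun trans q0 (padRep k L n)) 0 :=
    fun n hn => a_eq_pad hk hgen L n hn
  unfold searchAt
  rw [List.any_eq_true]
  constructor
  · rintro ⟨I, hImem, h2⟩
    rw [List.mem_range] at hImem
    rw [List.any_eq_true] at h2
    obtain ⟨T, hTmem, h3⟩ := h2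
    rw [List.mem_range] at hTmem
    rw [Bool.and_eq_true] at h3
    obtain ⟨hT1, hall⟩ := h3
    rw [decide_eq_true_eq] at hT1
    rw [List.all_eq_true] at hall
    refine ⟨I, T, hImem, hTmem, hT1, fun j hj => ?_⟩
    have hjle : j ≤ q * j := Nat.le_mul_of_pos_left j (by omega)
    have hcT : c * T ≤ c * M := Nat.mul_le_mul (le_refl c) (le_of_lt hTmem)
    have hjlt : j < c * M + 1 := by omega
    have hthis := hall j (List.mem_range.2 hjlt)
    rw [Bool.or_eq_true, Bool.not_eq_true', decide_eq_false_iff_not, decide_eq_true_eq] at hthis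
    rcases hthis with hbad | hgood
    · exact absurd hj hbad
    · rw [haC (I + j) (by omega), haC (I + T + j) (by omega)]
      exact hgood
  · rintro ⟨I, T, hIM, hTM, hT1, hper⟩
    refine ⟨I, List.mem_range.2 hIM, List.any_eq_true.2 ⟨T, List.mem_range.2 hTM, ?_⟩⟩
    rw [Bool.and_eq_true, decide_eq_true_eq]
    refine ⟨hT1, List.all_eq_true.2 fun j hj => ?_⟩
    rw [List.mem_range] at hj
    rw [Bool.or_eq_true, Bool.not_eq_true', decide_eq_false_iff_not, decide_eq_true_eq]
    by_cases hc : q * j + δ ≤ c * T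
    · right
      rw [← haC (I + j) (by omega), ← haC (I + T + j) (by omega)]
      exact hper j hc
    · left; exact hc

end Search

/-- The pumping bound computed from the input data. -/
def NBf (trans : List (List ℕ)) (q0 p q : ℕ) : ℕ :=
  2 * 2 ^ ((q + (p - q) + 2) *
    ((max q0 (transMax trans) + 1) * (2 * ((max q0 (transMax trans) + 1) * 3))))

/-- The decision procedure. -/
def decider (δ : ℕ) (x : ℕ × List (List ℕ) × ℕ × List ℕ × ℕ × ℕ) : Bool :=
  ! searchAt x.1 x.2.1 x.2.2.1 x.2.2.2.1 x.2.2.2.2.2 (x.2.2.2.2.1 - x.2.2.2.2.2) δ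
      (x.1 ^ NBf x.2.1 x.2.2.1 x.2.2.2.2.1 x.2.2.2.2.2)
      (NBf x.2.1 x.2.2.1 x.2.2.2.2.1 x.2.2.2.2.2 + x.2.2.2.2.1 + 1)

section Correct

variable {k : ℕ} {trans : List (List ℕ)} {q0 : ℕ} {out : List ℕ} {a : ℕ → ℕ}

lemma decider_correct {δ : ℕ} (hδ : δ ≤ 1) (hk : 2 ≤ k)
    (hgen : dfaoGenerates k trans q0 out a) {p q : ℕ} (hq : 1 ≤ q) (hpq : q < p) :
    decider δ (k, trans, q0, out, p, q) = true ↔ ¬ ∃ I T, PPow a q (p - q) δ I T := by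
  have hNB : NBf trans q0 p q = (({false, true} : Finset Bool) ×ˢ
      (TupU q (p - q) (max q0 (transMax trans))).powerset).card := (card_W _ _ _).symm
  have h1 : p + 2 ≤ 2 ^ (p + 1) := by
    have := Nat.lt_two_pow_self (n := p + 1)
    omega
  have h2 : (2 : ℕ) ^ (p + 1) ≤ k ^ (p + 1) := Nat.pow_le_pow_left hk _
  have h4 : (p - q) + 2 ≤ k ^ (p + 1) := by omega
  have hL : ((p - q) + 2) * (k ^ NBf trans q0 p q) ≤ k ^ (NBf trans q0 p q + p + 1) := by
    calc ((p - q) + 2) * (k ^ NBf trans q0 p q)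
        ≤ k ^ (p + 1) * k ^ NBf trans q0 p q := Nat.mul_le_mul h4 (le_refl _)
      _ = k ^ (NBf trans q0 p q + p + 1) := by rw [← pow_add]; congr 1; omega
  have hred : decider δ (k, trans, q0, out, p, q) =
      ! searchAt k trans q0 out q (p - q) δ (k ^ NBf trans q0 p q)
        (NBf trans q0 p q + p + 1) := rfl
  rw [hred]
  have hiff := searchAt_iff (a := a) (δ := δ) hk hgen hq hL
  constructor
  · intro h hex
    obtain ⟨I, T, hI, hT, hP⟩ := shrink hk hgen hδ hex
    rw [← hNB] at hI hT
    have hs : searchAt k trans q0 out q (p - q) δ (k ^ NBf trans q0 p q)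
        (NBf trans q0 p q + p + 1) = true := hiff.2 ⟨I, T, hI, hT, hP⟩
    rw [hs] at h
    simp at h
  · intro h
    cases hs : searchAt k trans q0 out q (p - q) δ (k ^ NBf trans q0 p q)
        (NBf trans q0 p q + p + 1) with
    | false => rfl
    | true =>
      obtain ⟨I, T, _, _, hP⟩ := hiff.1 hs
      exact absurd ⟨I, T, hP⟩ h

end Correct

section Comp

open Primrec

lemma pow_primrec : Primrec₂ ((· ^ ·) : ℕ → ℕ → ℕ) := by
  have h : Primrec fun p : ℕ × ℕ =>
      Nat.rec (motive := fun _ => ℕ) 1 (fun _ ih => ih * p.1) p.2 :=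
    Primrec.nat_rec' Primrec.snd (Primrec.const 1)
      ((Primrec.nat_mul.comp (Primrec.snd.comp Primrec.snd)
        (Primrec.fst.comp Primrec.fst)).to₂)
  have h2 : Primrec fun p : ℕ × ℕ => p.1 ^ p.2 := h.of_eq fun p => by
    induction p.2 with
    | zero => rfl
    | succ n ih => rw [pow_succ, ← ih]
  exact h2.to₂

lemma list_any' {α β : Type*} [Primcodable α] [Primcodable β]
    {f : α → List β} {p : α → β → Bool} (hf : Primrec f) (hp : Primrec₂ p) :
    Primrec fun a => (f a).any (p a) := by
  have h := Primrec.list_foldr hf (Primrec.const false)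
    (((Primrec.dom_bool₂ (· || ·)).comp
      (hp.comp Primrec.fst (Primrec.fst.comp Primrec.snd))
      (Primrec.snd.comp Primrec.snd)).to₂)
  exact h.of_eq fun a => by
    induction f a with
    | nil => rfl
    | cons b l ih => rw [List.foldr_cons, List.any_cons, ih]

lemma list_all' {α β : Type*} [Primcodable α] [Primcodable β]
    {f : α → List β} {p : α → β → Bool} (hf : Primrec f) (hp : Primrec₂ p) :
    Primrec fun a => (f a).all (p a) := by
  have h := Primrec.list_foldr hf (Primrec.const true)
    (((Primrec.dom_bool₂ (· && ·)).comp
      (hp.comp Primrec.fst (Primrec.fst.comp Primrec.snd))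
      (Primrec.snd.comp Primrec.snd)).to₂)
  exact h.of_eq fun a => by
    induction f a with
    | nil => rfl
    | cons b l ih => rw [List.foldr_cons, List.all_cons, ih]

lemma foldrmax_primrec : Primrec (fun l : List ℕ => l.foldr max 0) :=
  Primrec.list_foldr Primrec.id (Primrec.const 0)
    ((Primrec.nat_max.comp (Primrec.fst.comp Primrec.snd)
      (Primrec.snd.comp Primrec.snd)).to₂)

lemma transMax_primrec : Primrec transMax :=
  Primrec.list_foldr Primrec.id (Primrec.const 0)
    ((Primrec.nat_max.comp (foldrmax_primrec.comp (Primrec.fst.comp Primrec.snd))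
      (Primrec.snd.comp Primrec.snd)).to₂)

lemma padRep_primrec : Primrec (fun x : (ℕ × ℕ) × ℕ => padRep x.1.1 x.1.2 x.2) :=
  Primrec.list_map (Primrec.list_range.comp (Primrec.snd.comp Primrec.fst))
    ((Primrec.nat_mod.comp
      (Primrec.nat_div.comp (Primrec.snd.comp Primrec.fst)
        (pow_primrec.comp (Primrec.fst.comp (Primrec.fst.comp Primrec.fst)) Primrec.snd))
      (Primrec.fst.comp (Primrec.fst.comp Primrec.fst))).to₂)

lemma dfaoRun_primrec :
    Primrec (fun x : List (List ℕ) × ℕ × List ℕ => dfaoRun x.1 x.2.1 x.2.2) := by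
  have h := Primrec.list_foldl
    (f := fun x : List (List ℕ) × ℕ × List ℕ => x.2.2)
    (g := fun x : List (List ℕ) × ℕ × List ℕ => x.2.1)
    (h := fun x (sd : ℕ × ℕ) => (x.1.getD sd.1 []).getD sd.2 0)
    (Primrec.snd.comp Primrec.snd) (Primrec.fst.comp Primrec.snd)
    (((Primrec.list_getD 0).comp
      ((Primrec.list_getD ([] : List ℕ)).comp (Primrec.fst.comp Primrec.fst)
        (Primrec.fst.comp Primrec.snd))
      (Primrec.snd.comp Primrec.snd)).to₂)
  exact h.of_eq fun x => (dfaoRun_eq_foldl x.1 x.2.2 x.2.1).symm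

abbrev XIn : Type := ℕ × List (List ℕ) × ℕ × List ℕ × ℕ × ℕ

/-- auxiliary components of the decision procedure, as functions of the input -/
def Mf (x : XIn) : ℕ := x.1 ^ NBf x.2.1 x.2.2.1 x.2.2.2.2.1 x.2.2.2.2.2

def cf (x : XIn) : ℕ := x.2.2.2.2.1 - x.2.2.2.2.2

def Lf (x : XIn) : ℕ := NBf x.2.1 x.2.2.1 x.2.2.2.2.1 x.2.2.2.2.2 + x.2.2.2.2.1 + 1

def aCf (x : XIn) (n : ℕ) : ℕ :=
  (x.2.2.2.1).getD (dfaoRun x.2.1 x.2.2.1 (padRep x.1 (Lf x) n)) 0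

def innerf (δ : ℕ) (w : ((XIn × ℕ) × ℕ) × ℕ) : Bool :=
  !decide (w.1.1.1.2.2.2.2.2 * w.2 + δ ≤ cf w.1.1.1 * w.1.2) ||
    decide (aCf w.1.1.1 (w.1.1.2 + w.2) = aCf w.1.1.1 (w.1.1.2 + w.1.2 + w.2))

def Tpredf (δ : ℕ) (z : (XIn × ℕ) × ℕ) : Bool :=
  decide (1 ≤ z.2) && ((List.range (cf z.1.1 * Mf z.1.1 + 1)).all fun j => innerf δ (z, j))

def Ipredf (δ : ℕ) (y : XIn × ℕ) : Bool :=
  (List.range (Mf y.1)).any fun T => Tpredf δ (y, T)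

def searchf (δ : ℕ) (x : XIn) : Bool :=
  (List.range (Mf x)).any fun I => Ipredf δ (x, I)

lemma decider_eq_searchf (δ : ℕ) (x : XIn) : decider δ x = ! searchf δ x := rfl

set_option maxHeartbeats 2000000 in
lemma decider_primrec (δ : ℕ) : Primrec (decider δ) := by
  have hk : Primrec fun x : XIn => x.1 := Primrec.fst
  have htr : Primrec fun x : XIn => x.2.1 := Primrec.fst.comp Primrec.snd
  have hq0 : Primrec fun x : XIn => x.2.2.1 :=
    Primrec.fst.comp (Primrec.snd.comp Primrec.snd)
  have hout : Primrec fun x : XIn => x.2.2.2.1 :=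
    Primrec.fst.comp (Primrec.snd.comp (Primrec.snd.comp Primrec.snd))
  have hp : Primrec fun x : XIn => x.2.2.2.2.1 :=
    Primrec.fst.comp (Primrec.snd.comp (Primrec.snd.comp (Primrec.snd.comp Primrec.snd)))
  have hqq : Primrec fun x : XIn => x.2.2.2.2.2 :=
    Primrec.snd.comp (Primrec.snd.comp (Primrec.snd.comp (Primrec.snd.comp Primrec.snd)))
  have hB0 : Primrec fun x : XIn => max x.2.2.1 (transMax x.2.1) + 1 :=
    Primrec.nat_add.comp (Primrec.nat_max.comp hq0 (transMax_primrec.comp htr))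
      (Primrec.const 1)
  have hNB : Primrec fun x : XIn => NBf x.2.1 x.2.2.1 x.2.2.2.2.1 x.2.2.2.2.2 := by
    unfold NBf
    exact Primrec.nat_mul.comp (Primrec.const 2)
      (pow_primrec.comp (Primrec.const 2)
        (Primrec.nat_mul.comp
          (Primrec.nat_add.comp
            (Primrec.nat_add.comp hqq (Primrec.nat_sub.comp hp hqq)) (Primrec.const 2))
          (Primrec.nat_mul.comp hB0
            (Primrec.nat_mul.comp (Primrec.const 2)
              (Primrec.nat_mul.comp hB0 (Primrec.const 3))))))
  have hM : Primrec Mf := pow_primrec.comp hk hNB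
  have hLL : Primrec Lf :=
    Primrec.nat_add.comp (Primrec.nat_add.comp hNB hp) (Primrec.const 1)
  have hc : Primrec cf := Primrec.nat_sub.comp hp hqq
  have haC : Primrec fun y : XIn × ℕ => aCf y.1 y.2 :=
    (Primrec.list_getD 0).comp
      (hout.comp Primrec.fst)
      (dfaoRun_primrec.comp
        (Primrec.pair (htr.comp Primrec.fst)
          (Primrec.pair (hq0.comp Primrec.fst)
            (padRep_primrec.comp
              (Primrec.pair (Primrec.pair (hk.comp Primrec.fst) (hLL.comp Primrec.fst))
                Primrec.snd)))))
  have hx : Primrec fun w : ((XIn × ℕ) × ℕ) × ℕ => w.1.1.1 :=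
    Primrec.fst.comp (Primrec.fst.comp Primrec.fst)
  have hI : Primrec fun w : ((XIn × ℕ) × ℕ) × ℕ => w.1.1.2 :=
    Primrec.snd.comp (Primrec.fst.comp Primrec.fst)
  have hT : Primrec fun w : ((XIn × ℕ) × ℕ) × ℕ => w.1.2 :=
    Primrec.snd.comp Primrec.fst
  have hj : Primrec fun w : ((XIn × ℕ) × ℕ) × ℕ => w.2 := Primrec.snd
  have hb1 : Primrec fun w : ((XIn × ℕ) × ℕ) × ℕ =>
      decide (w.1.1.1.2.2.2.2.2 * w.2 + δ ≤ cf w.1.1.1 * w.1.2) :=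
    PrimrecPred.decide <| Primrec.nat_le.comp
      (Primrec.nat_add.comp (Primrec.nat_mul.comp (hqq.comp hx) hj) (Primrec.const δ))
      (Primrec.nat_mul.comp (hc.comp hx) hT)
  have hb2 : Primrec fun w : ((XIn × ℕ) × ℕ) × ℕ =>
      decide (aCf w.1.1.1 (w.1.1.2 + w.2) = aCf w.1.1.1 (w.1.1.2 + w.1.2 + w.2)) := by
    have h1 := haC.comp (Primrec.pair hx (Primrec.nat_add.comp hI hj))
    have h2 := haC.comp
      (Primrec.pair hx (Primrec.nat_add.comp (Primrec.nat_add.comp hI hT) hj))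
    have h := Primrec.eq.comp h1 h2
    exact h.decide
  have hinner : Primrec (innerf δ) := by
    unfold innerf
    exact (Primrec.dom_bool₂ (· || ·)).comp ((Primrec.dom_bool (!·)).comp hb1) hb2
  have hTpred : Primrec (Tpredf δ) := by
    unfold Tpredf
    exact (Primrec.dom_bool₂ (· && ·)).comp
      (Primrec.nat_le.comp (Primrec.const 1) Primrec.snd).decide
      (list_all'
        (Primrec.list_range.comp (Primrec.nat_add.comp
          (Primrec.nat_mul.comp (hc.comp (Primrec.fst.comp Primrec.fst))
            (hM.comp (Primrec.fst.comp Primrec.fst)))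
          (Primrec.const 1)))
        hinner.to₂)
  have hIpred : Primrec (Ipredf δ) := by
    unfold Ipredf
    exact list_any' (Primrec.list_range.comp (hM.comp Primrec.fst)) hTpred.to₂
  have hsearch : Primrec (searchf δ) := by
    unfold searchf
    exact list_any' (Primrec.list_range.comp hM) hIpred.to₂
  exact ((Primrec.dom_bool (!·)).comp hsearch).of_eq fun x => (decider_eq_searchf δ x).symm

end Comp

end AvoidAux

/-- It is decidable, given `k ≥ 2`, a DFAO generating a `k`-automatic sequence
`a`, and a rational `r = p/q > 1` (with `1 ≤ q < p`), whether `a` avoids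
`r`-powers; and likewise whether `a` avoids `r⁺`-powers. -/
theorem avoidsRPowers_decidable :
    ∃ f g : ℕ × List (List ℕ) × ℕ × List ℕ × ℕ × ℕ → Bool,
      Computable f ∧ Computable g ∧
      ∀ (k : ℕ) (trans : List (List ℕ)) (q0 : ℕ) (out : List ℕ) (a : ℕ → ℕ)
        (p q : ℕ),
        2 ≤ k → dfaoGenerates k trans q0 out a → 1 ≤ q → q < p →
        ((f (k, trans, q0, out, p, q) = true ↔
            ∀ w : List ℕ, IsFactorOf a w → ¬ IsRPower p q w) ∧
         (g (k, trans, q0, out, p, q) = true ↔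
            ∀ w : List ℕ, IsFactorOf a w → ¬ IsRPlusPower p q w)) := by
  refine ⟨AvoidAux.decider 1, AvoidAux.decider 0,
    (AvoidAux.decider_primrec 1).to_comp, (AvoidAux.decider_primrec 0).to_comp, ?_⟩
  intro k trans q0 out a p q hk hgen hq hpq
  constructor
  · rw [AvoidAux.decider_correct (δ := 1) (by omega) hk hgen hq hpq]
    constructor
    · intro h w hw hpow
      exact h ((AvoidAux.exists_rpower_iff hq hpq).1 ⟨w, hw, hpow⟩)
    · rintro h ⟨I, T, hP⟩
      obtain ⟨z, hz, hzpow⟩ := (AvoidAux.exists_rpower_iff hq hpq).2 ⟨I, T, hP⟩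
      exact h z hz hzpow
  · rw [AvoidAux.decider_correct (δ := 0) (by omega) hk hgen hq hpq]
    constructor
    · intro h w hw hpow
      exact h ((AvoidAux.exists_rpluspower_iff hq hpq).1 ⟨w, hw, hpow⟩)
    · rintro h ⟨I, T, hP⟩
      obtain ⟨z, hz, hzpow⟩ := (AvoidAux.exists_rpluspower_iff hq hpq).2 ⟨I, T, hP⟩
      exact h z hz hzpow
end

section
/- There is an algorithm that, given an integer k ≥ 2, a DFAO M generating a k-automatic sequence a = (a_n)_{n≥0}, and a rational number r > 1, decides whether a contains infinitely many distinct r-power factors (i.e., whether the set of factors of a that are r-powers is infinite); similarly for r^+-powers. -/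
/-! Algorithm definitions -/

abbrev S1 : Type := Bool × ℕ × ℕ × ℕ × ℕ

def dd (trans : List (List ℕ)) (qq d : ℕ) : ℕ := (trans.getD qq []).getD d 0

/-- one step of the product automaton, on digit triple (dT, di, dm). -/
def step1 (k p q : ℕ) (trans : List (List ℕ)) (s : S1) (dT di dm : ℕ) : S1 :=
  ( if di = dm then s.1 else decide (di < dm),
    (s.2.1 + q * dm + (p * (k-1) - ((p-q) * dT + q * di)) + (k-1)) / k,
    dd trans s.2.2.1 dm,
    dd trans s.2.2.2.1 ((dm + dT + s.2.2.2.2) % k),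
    (dm + dT + s.2.2.2.2) / k )

def accept1 (k p q : ℕ) (trans : List (List ℕ)) (out : List ℕ) (s : S1) : Bool :=
  s.1 && decide (s.2.1 ≤ p) &&
    !(decide (out.getD s.2.2.1 0 = out.getD
        (if s.2.2.2.2 = 0 then s.2.2.2.1 else dd trans s.2.2.2.1 1) 0))

def stepL (k p q : ℕ) (trans : List (List ℕ)) (l : List S1) (dTi : ℕ × ℕ) : List S1 :=
  l.flatMap fun s => (List.range k).map fun dm => step1 k p q trans s dTi.1 dTi.2 dm

def runL (k p q : ℕ) (trans : List (List ℕ)) (l : List S1) (u : List (ℕ × ℕ)) : List S1 :=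
  u.foldl (stepL k p q trans) l

def bany {α : Type} (l : List α) (f : α → Bool) : Bool :=
  l.foldl (fun b x => b || f x) false

def ball {α : Type} (l : List α) (f : α → Bool) : Bool :=
  l.foldl (fun b x => b && f x) true

def zeros (n : ℕ) : List (ℕ × ℕ) := (List.range n).map fun _ => ((0:ℕ), (0:ℕ))

def occAcc (k p q : ℕ) (trans : List (List ℕ)) (out : List ℕ) (l : List S1) : Bool :=
  ball (runL k p q trans l (zeros (p+1))) fun s => !accept1 k p q trans out s

def memb (s : S1) (l : List S1) : Bool := bany l fun x => decide (x = s)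

def eqv (l1 l2 : List S1) : Bool :=
  ball l1 (fun s => memb s l2) && ball l2 (fun s => memb s l1)

def pref (u : List (ℕ × ℕ)) (c : ℕ) : List (ℕ × ℕ) :=
  (List.range c).map fun j => u.getD j (0,0)

def init1 (t0 q0 : ℕ) : S1 := (true, t0, q0, q0, 0)

def check (k p q t0 q0 : ℕ) (trans : List (List ℕ)) (out : List ℕ)
    (u : List (ℕ × ℕ)) : Bool :=
  occAcc k p q trans out (runL k p q trans [init1 t0 q0] u) &&
  bany (List.range (u.length+1)) fun d2 =>
    bany (List.range d2) fun c =>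
      eqv (runL k p q trans [init1 t0 q0] (pref u c))
          (runL k p q trans [init1 t0 q0] (pref u d2)) &&
      bany (List.range u.length) fun j =>
        decide (c ≤ j) && decide ((u.getD j (0,0)).1 ≠ 0)

def letters (k : ℕ) : List (ℕ × ℕ) :=
  (List.range k).flatMap fun a => (List.range k).map fun b => (a, b)

def words (k : ℕ) : ℕ → List (List (ℕ × ℕ))
  | 0 => [[]]
  | n+1 => [] :: (words k n).flatMap fun w => (letters k).map fun d => d :: w

def nQ (trans : List (List ℕ)) (q0 : ℕ) : ℕ := (q0 :: 0 :: trans.flatten).length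

def bigN (p q q0 : ℕ) (trans : List (List ℕ)) : ℕ :=
  2 ^ (2 * ((p+q+2) * (nQ trans q0 * (nQ trans q0 * 2))))

def decider (k p q t0 q0 : ℕ) (trans : List (List ℕ)) (out : List ℕ) : Bool :=
  bany (words k (3 * bigN p q q0 trans + 3)) fun u => check k p q t0 q0 trans out u

section BoolFold
variable {α : Type}

theorem foldl_or (f : α → Bool) : ∀ (l : List α) (b : Bool),
    l.foldl (fun b x => b || f x) b = (b || l.any f)
  | [], b => by simp
  | x :: l, b => by
    simp [List.foldl_cons, foldl_or f l (b || f x), Bool.or_assoc]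

theorem bany_eq_true {l : List α} {f : α → Bool} :
    (l.foldl (fun b x => b || f x) false = true) ↔ ∃ x ∈ l, f x = true := by
  rw [foldl_or]; simp

theorem foldl_and (f : α → Bool) : ∀ (l : List α) (b : Bool),
    l.foldl (fun b x => b && f x) b = (b && l.all f)
  | [], b => by simp
  | x :: l, b => by
    simp [List.foldl_cons, foldl_and f l (b && f x), Bool.and_assoc]

theorem ball_eq_true {l : List α} {f : α → Bool} :
    (l.foldl (fun b x => b && f x) false = true) ↔ False := by
  rw [foldl_and]; simp

theorem ball_eq_true' {l : List α} {f : α → Bool} :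
    (l.foldl (fun b x => b && f x) true = true) ↔ ∀ x ∈ l, f x = true := by
  rw [foldl_and]; simp

end BoolFold

section Arith

/-- ceiling division characterization -/
theorem ceil_le_iff {k : ℕ} (hk : 1 ≤ k) (Y W : ℕ) :
    (Y + (k-1)) / k ≤ W ↔ Y ≤ k * W := by
  rw [Nat.div_le_iff_le_mul_add_pred hk]
  omega

theorem ceil_add_le_iff {k : ℕ} (hk : 1 ≤ k) (Y D C : ℕ) :
    (Y + (k-1)) / k + D ≤ C ↔ Y + k * D ≤ k * C := by
  rcases le_or_gt D C with h | h
  · have h2 : k * D ≤ k * C := Nat.mul_le_mul_left k h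
    have := ceil_le_iff hk Y (C - D)
    rw [Nat.mul_sub] at this
    omega
  · have h2 : k * C + k ≤ k * D := by
      have := Nat.mul_le_mul_left k (show C + 1 ≤ D by omega)
      rw [Nat.mul_add, Nat.mul_one] at this
      exact this
    generalize (Y + (k-1))/k = E
    omega

end Arith

section Digits

theorem ofDigits_zeros (k : ℕ) : ∀ n, Nat.ofDigits k (List.replicate n 0) = 0
  | 0 => rfl
  | n+1 => by
    rw [List.replicate_succ, Nat.ofDigits_cons, ofDigits_zeros k n]; simp

theorem digits_len_le_iff {k m n : ℕ} (hk : 2 ≤ k) :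
    (Nat.digits k m).length ≤ n ↔ m < k ^ n := by
  constructor
  · intro h
    calc m = Nat.ofDigits k (Nat.digits k m) := (Nat.ofDigits_digits k m).symm
    _ < k ^ (Nat.digits k m).length :=
        Nat.ofDigits_lt_base_pow_length (by omega) (fun _ hx => Nat.digits_lt_base (by omega) hx)
    _ ≤ k ^ n := Nat.pow_le_pow_right (by omega) h
  · intro h
    by_contra hc
    push_neg at hc
    rcases Nat.eq_zero_or_pos m with rfl | hm
    · simp at hc
    have h1 : k ^ (Nat.digits k m).length ≤ k * m :=
      Nat.base_pow_length_digits_le k m (by omega) (by omega)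
    have h2 : k ^ (n+1) ≤ k ^ (Nat.digits k m).length :=
      Nat.pow_le_pow_right (by omega) (by omega)
    rw [pow_succ] at h2
    have : k ^ n * k ≤ k * m := le_trans h2 h1
    have : k ^ n ≤ m := by
      have hkpos : 0 < k := by omega
      nlinarith
    omega

/-- exact-length representation -/
theorem exists_rep {k m n : ℕ} (hk : 2 ≤ k) (hm : m < k ^ n) :
    ∃ w : List ℕ, w.length = n ∧ (∀ d ∈ w, d < k) ∧ Nat.ofDigits k w = m := by
  refine ⟨Nat.digits k m ++ List.replicate (n - (Nat.digits k m).length) 0, ?_, ?_, ?_⟩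
  · have := (digits_len_le_iff hk).2 hm
    simp [List.length_append]; omega
  · intro d hd
    rcases List.mem_append.1 hd with h | h
    · exact Nat.digits_lt_base (by omega) h
    · have := List.eq_of_mem_replicate h; omega
  · rw [Nat.ofDigits_append, ofDigits_zeros]; simp [Nat.ofDigits_digits]

theorem ofDigits_lt {k : ℕ} (hk : 2 ≤ k) {w : List ℕ} (hw : ∀ d ∈ w, d < k) :
    Nat.ofDigits k w < k ^ w.length :=
  Nat.ofDigits_lt_base_pow_length (by omega) hw

theorem ofDigits_ge_of_getD {k : ℕ} (hk : 2 ≤ k) :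
    ∀ (w : List ℕ) (pos : ℕ), w.getD pos 0 ≠ 0 → k ^ pos ≤ Nat.ofDigits k w
  | [], pos => by simp [List.getD]
  | d :: w, 0 => by
    intro h
    rw [Nat.ofDigits_cons]
    simp only [List.getD_cons_zero] at h
    have : 1 ≤ d := by omega
    simp; omega
  | d :: w, pos+1 => by
    intro h
    rw [List.getD_cons_succ] at h
    have := ofDigits_ge_of_getD hk w pos h
    rw [Nat.ofDigits_cons, pow_succ]
    calc k ^ pos * k = k * k ^ pos := by ring
    _ ≤ k * Nat.ofDigits k w := Nat.mul_le_mul_left k this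
    _ ≤ d + k * Nat.ofDigits k w := by omega

theorem ofDigits_range_getD (k : ℕ) :
    ∀ (w : List ℕ) (n : ℕ), w.length ≤ n →
      Nat.ofDigits k ((List.range n).map fun j => w.getD j 0) = Nat.ofDigits k w
  | [], n => by
    intro _
    rw [show ((List.range n).map fun j => ([] : List ℕ).getD j 0) = List.replicate n 0 by
      simp [List.eq_replicate_iff, List.getD]]
    rw [ofDigits_zeros]; rfl
  | d :: w, n => by
    intro h
    rcases n with _ | n
    · simp at h
    have heq : (List.map ((fun j => (d :: w).getD j 0) ∘ Nat.succ) (List.range n))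
        = (List.range n).map fun j => w.getD j 0 := by
      apply List.map_congr_left; intro j _
      simp [Function.comp, List.getD_cons_succ]
    rw [List.range_succ_eq_map, List.map_cons, List.map_map, Nat.ofDigits_cons, heq,
      ofDigits_range_getD k w n (by simpa using h), Nat.ofDigits_cons]
    simp [List.getD]

end Digits

/-! Semantics of the product automaton -/

def run1 (k p q : ℕ) (trans : List (List ℕ)) (s : S1) (v : List ((ℕ × ℕ) × ℕ)) : S1 :=
  v.foldl (fun s d => step1 k p q trans s d.1.1 d.1.2 d.2) s

def Tv (k : ℕ) (v : List ((ℕ × ℕ) × ℕ)) : ℕ := Nat.ofDigits k (v.map fun x => x.1.1)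
def Iv (k : ℕ) (v : List ((ℕ × ℕ) × ℕ)) : ℕ := Nat.ofDigits k (v.map fun x => x.1.2)
def Mv (k : ℕ) (v : List ((ℕ × ℕ) × ℕ)) : ℕ := Nat.ofDigits k (v.map fun x => x.2)

theorem Tv_cons (k : ℕ) (x : (ℕ × ℕ) × ℕ) (v : List ((ℕ × ℕ) × ℕ)) :
    Tv k (x :: v) = x.1.1 + k * Tv k v := by
  simp [Tv, Nat.ofDigits_cons]

theorem Iv_cons (k : ℕ) (x : (ℕ × ℕ) × ℕ) (v : List ((ℕ × ℕ) × ℕ)) :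
    Iv k (x :: v) = x.1.2 + k * Iv k v := by
  simp [Iv, Nat.ofDigits_cons]

theorem Mv_cons (k : ℕ) (x : (ℕ × ℕ) × ℕ) (v : List ((ℕ × ℕ) × ℕ)) :
    Mv k (x :: v) = x.2 + k * Mv k v := by
  simp [Mv, Nat.ofDigits_cons]

theorem run1_cons (k p q : ℕ) (trans : List (List ℕ)) (s : S1) (x : (ℕ × ℕ) × ℕ)
    (v : List ((ℕ × ℕ) × ℕ)) :
    run1 k p q trans s (x :: v) = run1 k p q trans (step1 k p q trans s x.1.1 x.1.2 x.2) v := rfl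

theorem mem_stepL {k p q : ℕ} {trans : List (List ℕ)} {l : List S1} {d : ℕ × ℕ} {s' : S1} :
    s' ∈ stepL k p q trans l d ↔ ∃ s ∈ l, ∃ dm, dm < k ∧ s' = step1 k p q trans s d.1 d.2 dm := by
  simp only [stepL, List.mem_flatMap, List.mem_map, List.mem_range]
  constructor
  · rintro ⟨s, hs, dm, hdm, rfl⟩; exact ⟨s, hs, dm, hdm, rfl⟩
  · rintro ⟨s, hs, dm, hdm, rfl⟩; exact ⟨s, hs, dm, hdm, rfl⟩

theorem mem_runL (k p q : ℕ) (trans : List (List ℕ)) :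
    ∀ (u : List (ℕ × ℕ)) (l : List S1) (s' : S1),
      s' ∈ runL k p q trans l u ↔
        ∃ s ∈ l, ∃ mw : List ℕ, mw.length = u.length ∧ (∀ d ∈ mw, d < k) ∧
          run1 k p q trans s (u.zip mw) = s'
  | [], l, s' => by
    constructor
    · intro h; exact ⟨s', h, [], rfl, by simp, rfl⟩
    · rintro ⟨s, hs, mw, hlen, _, hrun⟩
      simp only [List.length_nil, List.length_eq_zero_iff] at hlen; subst hlen
      simpa [run1] using hrun ▸ hs
  | d :: u, l, s' => by
    have IH := mem_runL k p q trans u (stepL k p q trans l d) s'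
    constructor
    · intro h
      rcases IH.1 h with ⟨s1, hs1, mw, hlen, hdig, hrun⟩
      rcases mem_stepL.1 hs1 with ⟨s, hs, dm, hdm, rfl⟩
      exact ⟨s, hs, dm :: mw, by simp [hlen], by
        intro x hx; rcases List.mem_cons.1 hx with rfl | hx
        · exact hdm
        · exact hdig x hx, by simpa [List.zip_cons_cons, run1_cons] using hrun⟩
    · rintro ⟨s, hs, mw, hlen, hdig, hrun⟩
      rcases mw with _ | ⟨dm, mw⟩
      · simp at hlen
      refine IH.2 ⟨step1 k p q trans s d.1 d.2 dm,
        mem_stepL.2 ⟨s, hs, dm, hdig dm (by simp), rfl⟩, mw, by simpa using hlen,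
        fun x hx => hdig x (List.mem_cons_of_mem _ hx), ?_⟩
      simpa [List.zip_cons_cons, run1_cons] using hrun

theorem runL_append (k p q : ℕ) (trans : List (List ℕ)) (l : List S1)
    (u v : List (ℕ × ℕ)) :
    runL k p q trans l (u ++ v) = runL k p q trans (runL k p q trans l u) v := by
  simp [runL, List.foldl_append]

/-- comparison component -/
theorem run1_cmp (k p q : ℕ) (trans : List (List ℕ)) (hk : 2 ≤ k) :
    ∀ (v : List ((ℕ × ℕ) × ℕ)), (∀ x ∈ v, x.1.2 < k ∧ x.2 < k) → ∀ s : S1,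
      ((run1 k p q trans s v).1 = true ↔
        (Iv k v < Mv k v ∨ (Iv k v = Mv k v ∧ s.1 = true)))
  | [], _, s => by simp [run1, Iv, Mv]
  | x :: v, hv, s => by
    have hd := hv x (by simp)
    have IH := run1_cmp k p q trans hk v (fun y hy => hv y (List.mem_cons_of_mem _ hy))
      (step1 k p q trans s x.1.1 x.1.2 x.2)
    rw [run1_cons, IH, Iv_cons, Mv_cons]
    have hstep : (step1 k p q trans s x.1.1 x.1.2 x.2).1
        = if x.1.2 = x.2 then s.1 else decide (x.1.2 < x.2) := rfl
    rw [hstep]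
    rcases lt_trichotomy (Iv k v) (Mv k v) with h | h | h
    · have h2 : k * Iv k v + k ≤ k * Mv k v := by
        have := Nat.mul_le_mul_left k (show Iv k v + 1 ≤ Mv k v by omega)
        rw [Nat.mul_add, Nat.mul_one] at this; exact this
      constructor
      · intro _; left; omega
      · intro _; left; omega
    · rw [h]
      by_cases hde : x.1.2 = x.2
      · rw [if_pos hde, hde]
        constructor
        · rintro (h1 | ⟨h1, h2⟩)
          · omega
          · right; exact ⟨rfl, h2⟩
        · rintro (h1 | ⟨_, h2⟩)
          · omega
          · right; exact ⟨rfl, h2⟩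
      · rw [if_neg hde]
        constructor
        · rintro (h1 | ⟨h1, h2⟩)
          · left; omega
          · simp only [decide_eq_true_eq] at h2; left; omega
        · rintro (h1 | ⟨h1, _⟩)
          · right
            refine ⟨rfl, ?_⟩
            have : x.1.2 < x.2 := by omega
            simpa using this
          · exact absurd (by omega : x.1.2 = x.2) hde
    · have h2 : k * Mv k v + k ≤ k * Iv k v := by
        have := Nat.mul_le_mul_left k (show Mv k v + 1 ≤ Iv k v by omega)
        rw [Nat.mul_add, Nat.mul_one] at this; exact this
      constructor
      · intro hh
        rcases hh with h1 | ⟨h1, _⟩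
        · omega
        · omega
      · intro hh
        rcases hh with h1 | ⟨h1, _⟩
        · omega
        · omega

/-- linear-inequality component -/
theorem run1_lin (k p q : ℕ) (trans : List (List ℕ)) (hk : 2 ≤ k) (hq : 1 ≤ q) (hqp : q < p) :
    ∀ (v : List ((ℕ × ℕ) × ℕ)), (∀ x ∈ v, x.1.1 < k ∧ x.1.2 < k ∧ x.2 < k) → ∀ s : S1,
      ((run1 k p q trans s v).2.1 ≤ p ↔
        s.2.1 + q * Mv k v ≤ (p - q) * Tv k v + q * Iv k v + p)
  | [], _, s => by simp [run1, Tv, Iv, Mv]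
  | x :: v, hv, s => by
    have hd := hv x (by simp)
    have IH := run1_lin k p q trans hk hq hqp v (fun y hy => hv y (List.mem_cons_of_mem _ hy))
      (step1 k p q trans s x.1.1 x.1.2 x.2)
    rw [run1_cons, IH, Tv_cons, Iv_cons, Mv_cons]
    have hstep : (step1 k p q trans s x.1.1 x.1.2 x.2).2.1
        = (s.2.1 + q * x.2 + (p * (k-1) - ((p-q) * x.1.1 + q * x.1.2)) + (k-1)) / k := rfl
    rw [hstep]
    have hE : (p - q) * x.1.1 + q * x.1.2 ≤ p * (k - 1) := by
      have h1 : (p - q) * x.1.1 ≤ (p - q) * (k - 1) := Nat.mul_le_mul_left _ (by omega)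
      have h2 : q * x.1.2 ≤ q * (k - 1) := Nat.mul_le_mul_left _ (by omega)
      have h3 : (p - q) * (k - 1) + q * (k - 1) = p * (k - 1) := by
        rw [← Nat.add_mul]; congr 1; omega
      omega
    rw [ceil_add_le_iff (by omega : 1 ≤ k)]
    have hqp' : q ≤ p := le_of_lt hqp
    zify [hE, hqp', (by omega : 1 ≤ k)]
    constructor <;> intro h <;> nlinarith [h]

/-- m-track DFAO component -/
theorem run1_qm (k p q : ℕ) (trans : List (List ℕ)) :
    ∀ (v : List ((ℕ × ℕ) × ℕ)) (s : S1),
      (run1 k p q trans s v).2.2.1 = dfaoRun trans s.2.2.1 (v.map fun x => x.2)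
  | [], s => rfl
  | x :: v, s => by
    rw [run1_cons, List.map_cons]
    rw [run1_qm k p q trans v]
    rfl

/-- (m+T)-track adder+DFAO component -/
theorem run1_sum (k p q : ℕ) (trans : List (List ℕ)) (hk : 2 ≤ k) :
    ∀ (v : List ((ℕ × ℕ) × ℕ)), (∀ x ∈ v, x.1.1 < k ∧ x.2 < k) → ∀ s : S1, s.2.2.2.2 ≤ 1 →
      ∃ w : List ℕ, (∀ d ∈ w, d < k) ∧
        Nat.ofDigits k w = Tv k v + Mv k v + s.2.2.2.2 ∧
        dfaoRun trans s.2.2.2.1 w =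
          (if (run1 k p q trans s v).2.2.2.2 = 0 then (run1 k p q trans s v).2.2.2.1
           else dd trans (run1 k p q trans s v).2.2.2.1 1)
  | [], _, s, hc => by
    rcases Nat.le_one_iff_eq_zero_or_eq_one.1 hc with h | h
    · exact ⟨[], by simp, by simp [Tv, Iv, Mv, h], by simp [run1, h, dfaoRun]⟩
    · refine ⟨[1], by intro d hd; simp at hd; omega, by simp [Tv, Iv, Mv, h, Nat.ofDigits], ?_⟩
      simp [run1, h, dfaoRun, dd]
  | x :: v, hv, s, hc => by
    have hd := hv x (by simp)
    set s' := step1 k p q trans s x.1.1 x.1.2 x.2 with hs'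
    have hc' : s'.2.2.2.2 ≤ 1 := by
      have : s'.2.2.2.2 = (x.2 + x.1.1 + s.2.2.2.2) / k := rfl
      rw [this]
      have h2 : (x.2 + x.1.1 + s.2.2.2.2) / k < 2 :=
        (Nat.div_lt_iff_lt_mul (by omega)).2 (by omega)
      omega
    rcases run1_sum k p q trans hk v (fun y hy => hv y (List.mem_cons_of_mem _ hy)) s' hc' with
      ⟨w, hwdig, hwval, hwrun⟩
    refine ⟨(x.2 + x.1.1 + s.2.2.2.2) % k :: w, ?_, ?_, ?_⟩
    · intro d hdm
      rcases List.mem_cons.1 hdm with rfl | hdm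
      · exact Nat.mod_lt _ (by omega)
      · exact hwdig d hdm
    · rw [Nat.ofDigits_cons, hwval, Tv_cons, Mv_cons]
      have hs'c : s'.2.2.2.2 = (x.2 + x.1.1 + s.2.2.2.2) / k := rfl
      have hdm := Nat.div_add_mod (x.2 + x.1.1 + s.2.2.2.2) k
      push_cast
      rw [hs'c]
      have : k * ((x.2 + x.1.1 + s.2.2.2.2) / k) + (x.2 + x.1.1 + s.2.2.2.2) % k
          = x.2 + x.1.1 + s.2.2.2.2 := hdm
      ring_nf
      omega
    · have : dfaoRun trans s.2.2.2.1 ((x.2 + x.1.1 + s.2.2.2.2) % k :: w)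
          = dfaoRun trans (dd trans s.2.2.2.1 ((x.2 + x.1.1 + s.2.2.2.2) % k)) w := rfl
      rw [this]
      have hq' : dd trans s.2.2.2.1 ((x.2 + x.1.1 + s.2.2.2.2) % k) = s'.2.2.2.1 := rfl
      rw [hq', hwrun, run1_cons]

/-! Central correctness: `occAcc` decides the occurrence property -/

def Occ (a : ℕ → ℕ) (p q t0 i T : ℕ) : Prop :=
  ∀ m, i ≤ m → t0 + q * m ≤ (p - q) * T + q * i + p → a m = a (m + T)

def TvU (k : ℕ) (u : List (ℕ × ℕ)) : ℕ := Nat.ofDigits k (u.map Prod.fst)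
def IvU (k : ℕ) (u : List (ℕ × ℕ)) : ℕ := Nat.ofDigits k (u.map Prod.snd)

theorem zeros_map_fst (n : ℕ) : (zeros n).map Prod.fst = List.replicate n 0 := by
  simp [zeros, List.map_map, List.eq_replicate_iff]

theorem zeros_map_snd (n : ℕ) : (zeros n).map Prod.snd = List.replicate n 0 := by
  simp [zeros, List.map_map, List.eq_replicate_iff]

theorem TvU_append_zeros (k n : ℕ) (u : List (ℕ × ℕ)) :
    TvU k (u ++ zeros n) = TvU k u := by
  simp only [TvU, List.map_append, Nat.ofDigits_append, zeros_map_fst, ofDigits_zeros]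
  simp

theorem IvU_append_zeros (k n : ℕ) (u : List (ℕ × ℕ)) :
    IvU k (u ++ zeros n) = IvU k u := by
  simp only [IvU, List.map_append, Nat.ofDigits_append, zeros_map_snd, ofDigits_zeros]
  simp

theorem zeros_length (n : ℕ) : (zeros n).length = n := by simp [zeros]

theorem zeros_digits {k : ℕ} (hk : 2 ≤ k) (n : ℕ) :
    ∀ d ∈ zeros n, d.1 < k ∧ d.2 < k := by
  intro d hd
  simp only [zeros, List.mem_map] at hd
  rcases hd with ⟨_, _, rfl⟩
  omega

theorem accept1_run1 (k p q : ℕ) (trans : List (List ℕ)) (out : List ℕ) (q0 t0 : ℕ)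
    (a : ℕ → ℕ) (hk : 2 ≤ k) (hq : 1 ≤ q) (hqp : q < p)
    (hgen : dfaoGenerates k trans q0 out a)
    (v : List ((ℕ × ℕ) × ℕ)) (hv : ∀ x ∈ v, x.1.1 < k ∧ x.1.2 < k ∧ x.2 < k) :
    (accept1 k p q trans out (run1 k p q trans (init1 t0 q0) v) = true ↔
      (Iv k v ≤ Mv k v ∧ t0 + q * Mv k v ≤ (p - q) * Tv k v + q * Iv k v + p ∧
        a (Mv k v) ≠ a (Mv k v + Tv k v))) := by
  have hcmp := run1_cmp k p q trans hk v (fun x hx => ⟨(hv x hx).2.1, (hv x hx).2.2⟩)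
    (init1 t0 q0)
  have hlin := run1_lin k p q trans hk hq hqp v hv (init1 t0 q0)
  have hqm := run1_qm k p q trans v (init1 t0 q0)
  rcases run1_sum k p q trans hk v (fun x hx => ⟨(hv x hx).1, (hv x hx).2.2⟩)
    (init1 t0 q0) (by simp [init1]) with ⟨w, hwdig, hwval, hwrun⟩
  have hM : a (Mv k v) = out.getD (run1 k p q trans (init1 t0 q0) v).2.2.1 0 := by
    rw [hqm]
    exact hgen (Mv k v) (v.map fun x => x.2)
      (by intro d hd; rcases List.mem_map.1 hd with ⟨x, hx, rfl⟩; exact (hv x hx).2.2) (by rfl)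
  have hMT : a (Mv k v + Tv k v) =
      out.getD (if (run1 k p q trans (init1 t0 q0) v).2.2.2.2 = 0
        then (run1 k p q trans (init1 t0 q0) v).2.2.2.1
        else dd trans (run1 k p q trans (init1 t0 q0) v).2.2.2.1 1) 0 := by
    rw [← hwrun]
    exact hgen _ w hwdig (by rw [hwval]; simp [init1]; ring)
  simp only [accept1, Bool.and_eq_true, decide_eq_true_eq, Bool.not_eq_true',
    decide_eq_false_iff_not, ne_eq]
  rw [hcmp, hlin, ← hM, ← hMT]
  simp only [init1]
  constructor
  · rintro ⟨⟨h1, h2⟩, h3⟩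
    refine ⟨?_, h2, h3⟩
    rcases h1 with h1 | ⟨h1, _⟩
    · omega
    · omega
  · rintro ⟨h1, h2, h3⟩
    refine ⟨⟨?_, h2⟩, h3⟩
    rcases Nat.lt_or_ge (Iv k v) (Mv k v) with h | h
    · exact Or.inl h
    · exact Or.inr ⟨by omega, trivial⟩

theorem occAcc_iff (k p q : ℕ) (trans : List (List ℕ)) (out : List ℕ) (q0 t0 : ℕ)
    (a : ℕ → ℕ) (hk : 2 ≤ k) (hq : 1 ≤ q) (hqp : q < p)
    (hgen : dfaoGenerates k trans q0 out a)
    (u : List (ℕ × ℕ)) (hu : ∀ d ∈ u, d.1 < k ∧ d.2 < k) :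
    (occAcc k p q trans out (runL k p q trans [init1 t0 q0] u) = true ↔
      Occ a p q t0 (IvU k u) (TvU k u)) := by
  set u' := u ++ zeros (p+1) with hu'def
  have hu' : ∀ d ∈ u', d.1 < k ∧ d.2 < k := by
    intro d hd
    rcases List.mem_append.1 hd with h | h
    · exact hu d h
    · exact zeros_digits hk _ d h
  have hT' : TvU k u' = TvU k u := TvU_append_zeros k (p+1) u
  have hI' : IvU k u' = IvU k u := IvU_append_zeros k (p+1) u
  have hrw : runL k p q trans (runL k p q trans [init1 t0 q0] u) (zeros (p+1))
      = runL k p q trans [init1 t0 q0] u' := (runL_append k p q trans _ u (zeros (p+1))).symm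
  have key : (occAcc k p q trans out (runL k p q trans [init1 t0 q0] u) = true ↔
      ∀ mw : List ℕ, mw.length = u'.length → (∀ d ∈ mw, d < k) →
        ¬(IvU k u ≤ Nat.ofDigits k mw ∧
          t0 + q * Nat.ofDigits k mw ≤ (p - q) * TvU k u + q * IvU k u + p ∧
          a (Nat.ofDigits k mw) ≠ a (Nat.ofDigits k mw + TvU k u))) := by
    rw [occAcc, hrw, show (ball (runL k p q trans [init1 t0 q0] u')
        fun s => !accept1 k p q trans out s) =
      (runL k p q trans [init1 t0 q0] u').foldl
        (fun b x => b && (fun s => !accept1 k p q trans out s) x) true from rfl,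
      ball_eq_true']
    constructor
    · intro h mw hlen hdig
      have hmem : run1 k p q trans (init1 t0 q0) (u'.zip mw)
          ∈ runL k p q trans [init1 t0 q0] u' :=
        (mem_runL k p q trans u' [init1 t0 q0] _).2
          ⟨init1 t0 q0, by simp, mw, hlen.symm ▸ rfl, hdig, rfl⟩
      have hfalse := h _ hmem
      rw [Bool.not_eq_true'] at hfalse
      have hv : ∀ x ∈ u'.zip mw, x.1.1 < k ∧ x.1.2 < k ∧ x.2 < k := by
        intro x hx
        have h1 := List.of_mem_zip hx
        exact ⟨(hu' x.1 h1.1).1, (hu' x.1 h1.1).2, hdig x.2 h1.2⟩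
      have hacc := accept1_run1 k p q trans out q0 t0 a hk hq hqp hgen (u'.zip mw) hv
      have hTz : Tv k (u'.zip mw) = TvU k u := by
        rw [Tv, show ((u'.zip mw).map fun x => x.1.1)
            = ((u'.zip mw).map Prod.fst).map Prod.fst by rw [List.map_map]; rfl,
          List.map_fst_zip (le_of_eq hlen.symm), ← hT']
        rfl
      have hIz : Iv k (u'.zip mw) = IvU k u := by
        rw [Iv, show ((u'.zip mw).map fun x => x.1.2)
            = ((u'.zip mw).map Prod.fst).map Prod.snd by rw [List.map_map]; rfl,
          List.map_fst_zip (le_of_eq hlen.symm), ← hI']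
        rfl
      have hMz : Mv k (u'.zip mw) = Nat.ofDigits k mw := by
        rw [Mv, show ((u'.zip mw).map fun x => x.2) = (u'.zip mw).map Prod.snd from rfl,
          List.map_snd_zip (le_of_eq hlen)]
      rw [hTz, hIz, hMz] at hacc
      intro hcon
      have h2 := hacc.2 hcon
      rw [h2] at hfalse
      simp at hfalse
    · intro h s hs
      rcases (mem_runL k p q trans u' [init1 t0 q0] s).1 hs with ⟨s0, hs0, mw, hlen, hdig, hrun⟩
      have hs0' : s0 = init1 t0 q0 := by simpa using hs0
      subst hs0'
      have hv : ∀ x ∈ u'.zip mw, x.1.1 < k ∧ x.1.2 < k ∧ x.2 < k := by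
        intro x hx
        have h1 := List.of_mem_zip hx
        exact ⟨(hu' x.1 h1.1).1, (hu' x.1 h1.1).2, hdig x.2 h1.2⟩
      have hacc := accept1_run1 k p q trans out q0 t0 a hk hq hqp hgen (u'.zip mw) hv
      have hTz : Tv k (u'.zip mw) = TvU k u := by
        rw [Tv, show ((u'.zip mw).map fun x => x.1.1)
            = ((u'.zip mw).map Prod.fst).map Prod.fst by rw [List.map_map]; rfl,
          List.map_fst_zip (le_of_eq hlen.symm), ← hT']
        rfl
      have hIz : Iv k (u'.zip mw) = IvU k u := by
        rw [Iv, show ((u'.zip mw).map fun x => x.1.2)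
            = ((u'.zip mw).map Prod.fst).map Prod.snd by rw [List.map_map]; rfl,
          List.map_fst_zip (le_of_eq hlen.symm), ← hI']
        rfl
      have hMz : Mv k (u'.zip mw) = Nat.ofDigits k mw := by
        rw [Mv, show ((u'.zip mw).map fun x => x.2) = (u'.zip mw).map Prod.snd from rfl,
          List.map_snd_zip (le_of_eq hlen)]
      rw [hTz, hIz, hMz] at hacc
      rw [← hrun, Bool.not_eq_true']
      rw [← Bool.not_eq_true]
      intro hacc1
      exact h mw hlen hdig (hacc.1 hacc1)
  rw [key]
  constructor
  · intro h m him hlin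
    by_contra hne
    have hTlt : TvU k u < k ^ u.length := by
      have hl : (u.map Prod.fst).length = u.length := by simp
      rw [TvU, ← hl]
      apply ofDigits_lt hk
      intro d hd
      rcases List.mem_map.1 hd with ⟨x, hx, rfl⟩
      exact (hu x hx).1
    have hIlt : IvU k u < k ^ u.length := by
      have hl : (u.map Prod.snd).length = u.length := by simp
      rw [IvU, ← hl]
      apply ofDigits_lt hk
      intro d hd
      rcases List.mem_map.1 hd with ⟨x, hx, rfl⟩
      exact (hu x hx).2
    have hmb : m < k ^ u'.length := by
      have h1 : m ≤ q * m := Nat.le_mul_of_pos_left m (by omega)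
      have h2 : (p - q) * TvU k u ≤ (p - q) * (k ^ u.length - 1) :=
        Nat.mul_le_mul_left _ (by omega)
      have h3 : q * IvU k u ≤ q * (k ^ u.length - 1) := Nat.mul_le_mul_left _ (by omega)
      have h4 : (p - q) * (k ^ u.length - 1) + q * (k ^ u.length - 1) = p * (k ^ u.length - 1) := by
        rw [← Nat.add_mul]; congr 1; omega
      have h5 : m ≤ p * (k ^ u.length - 1) + p := by omega
      have h6 : p * (k ^ u.length - 1) + p ≤ p * k ^ u.length := by
        have ha : 1 ≤ k ^ u.length := Nat.one_le_pow _ _ (by omega)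
        have hb : p * (k ^ u.length - 1 + 1) = p * k ^ u.length := by congr 1; omega
        have hc : p * (k ^ u.length - 1) + p = p * (k ^ u.length - 1 + 1) := by ring
        omega
      have h7 : p < k ^ (p+1) := by
        calc p < 2 ^ (p+1) := lt_of_lt_of_le (Nat.lt_two_pow_self) (Nat.pow_le_pow_right
          (by omega) (by omega))
        _ ≤ k ^ (p+1) := Nat.pow_le_pow_left (by omega) _
      have h8 : u'.length = u.length + (p+1) := by
        rw [hu'def, List.length_append, zeros_length]
      rw [h8, pow_add]
      calc m ≤ p * k ^ u.length := by omega
      _ < k ^ (p+1) * k ^ u.length :=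
          mul_lt_mul_of_pos_right h7 (Nat.one_le_pow _ _ (by omega))
      _ = k ^ u.length * k ^ (p+1) := by ring
    rcases exists_rep hk hmb with ⟨mw, hlen, hdig, hval⟩
    exact h mw hlen hdig (by rw [hval]; exact ⟨him, hlin, hne⟩)
  · intro h mw _ _
    rintro ⟨h1, h2, h3⟩
    exact h3 (h _ h1 h2)

/-! State-space invariants, pigeonhole, shrink, words -/

def Qset (trans : List (List ℕ)) (q0 : ℕ) : Finset ℕ := (q0 :: 0 :: trans.flatten).toFinset

def Fset (p q q0 : ℕ) (trans : List (List ℕ)) : Finset S1 :=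
  (Finset.univ : Finset Bool) ×ˢ (Finset.range (p+q+2) ×ˢ (Qset trans q0 ×ˢ
    (Qset trans q0 ×ˢ Finset.range 2)))

theorem dd_mem (trans : List (List ℕ)) (q0 qq d : ℕ) : dd trans qq d ∈ Qset trans q0 := by
  have hrow : trans.getD qq [] ∈ trans ∨ trans.getD qq [] = ([] : List ℕ) := by
    rcases Nat.lt_or_ge qq trans.length with h | h
    · left; rw [List.getD_eq_getElem _ _ h]; exact List.getElem_mem h
    · right; exact List.getD_eq_default _ _ h
  rcases Nat.lt_or_ge d (trans.getD qq []).length with h | h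
  · have hmem : (trans.getD qq []).getD d 0 ∈ trans.getD qq [] := by
      rw [List.getD_eq_getElem _ _ h]; exact List.getElem_mem h
    rcases hrow with hr | hr
    · simp only [Qset, dd, List.mem_toFinset, List.mem_cons]
      right; right
      exact List.mem_flatten.2 ⟨_, hr, hmem⟩
    · rw [hr] at hmem; simp at hmem
  · simp only [Qset, dd, List.mem_toFinset, List.mem_cons]
    right; left
    exact (List.getD_eq_default _ _ h).symm ▸ rfl

theorem step1_mem {k p q q0 : ℕ} {trans : List (List ℕ)} (hk : 2 ≤ k) (hq : 1 ≤ q)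
    (hqp : q < p) {s : S1} (hs : s ∈ Fset p q q0 trans)
    {dT di dm : ℕ} (h1 : dT < k) (h2 : di < k) (h3 : dm < k) :
    step1 k p q trans s dT di dm ∈ Fset p q q0 trans := by
  simp only [Fset, Finset.mem_product, Finset.mem_range] at hs ⊢
  obtain ⟨-, ht, hqm, hqs, hc⟩ := hs
  refine ⟨Finset.mem_univ _, ?_, dd_mem _ _ _ _, dd_mem _ _ _ _, ?_⟩
  · show (s.2.1 + q * dm + (p * (k-1) - ((p-q) * dT + q * di)) + (k-1)) / k < p+q+2
    have key : (s.2.1 + q * dm + (p * (k-1) - ((p-q) * dT + q * di)) + (k-1)) / k ≤ p+q+1 := by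
      rw [ceil_le_iff (by omega : 1 ≤ k)]
      have e1 : q * dm ≤ q * (k-1) := Nat.mul_le_mul_left _ (by omega)
      have e2 : p * (k-1) - ((p-q) * dT + q * di) ≤ p * (k-1) := Nat.sub_le _ _
      have e3 : q * (k-1) + p * (k-1) = (q + p) * (k-1) := (Nat.add_mul _ _ _).symm
      have e4 : (q+p) * (k-1) + (q+p) = (q+p) * k := by
        rw [← Nat.mul_succ]; congr 1; omega
      have e5 : k * (p+q+1) = (q+p) * k + k := by ring
      omega
    omega
  · show (dm + dT + s.2.2.2.2)/k < 2
    exact (Nat.div_lt_iff_lt_mul (by omega)).2 (by omega)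

theorem init1_mem {p q q0 t0 : ℕ} {trans : List (List ℕ)} (ht0 : t0 ≤ p+q+1) :
    init1 t0 q0 ∈ Fset p q q0 trans := by
  simp only [Fset, init1, Finset.mem_product, Finset.mem_range]
  refine ⟨Finset.mem_univ _, by omega, ?_, ?_, by omega⟩ <;>
    simp [Qset]

theorem runL_mem_Fset {k p q q0 : ℕ} {trans : List (List ℕ)} (hk : 2 ≤ k) (hq : 1 ≤ q)
    (hqp : q < p) :
    ∀ (u : List (ℕ × ℕ)), (∀ d ∈ u, d.1 < k ∧ d.2 < k) →
      ∀ (l : List S1), (∀ s ∈ l, s ∈ Fset p q q0 trans) →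
      ∀ s ∈ runL k p q trans l u, s ∈ Fset p q q0 trans
  | [], _, l, hl => hl
  | d :: u, hu, l, hl => by
    have hd := hu d (by simp)
    apply runL_mem_Fset hk hq hqp u (fun x hx => hu x (List.mem_cons_of_mem _ hx))
    intro s hs
    rcases mem_stepL.1 hs with ⟨s0, hs0, dm, hdm, rfl⟩
    exact step1_mem hk hq hqp (hl s0 hs0) hd.1 hd.2 hdm

/-! membership-respect lemmas -/

theorem stepL_respect (k p q : ℕ) (trans : List (List ℕ)) {l1 l2 : List S1}
    (h : ∀ s, s ∈ l1 ↔ s ∈ l2) (d : ℕ × ℕ) :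
    ∀ s, s ∈ stepL k p q trans l1 d ↔ s ∈ stepL k p q trans l2 d := by
  intro s
  rw [mem_stepL, mem_stepL]
  constructor
  · rintro ⟨s0, hs0, dm, hdm, rfl⟩; exact ⟨s0, (h s0).1 hs0, dm, hdm, rfl⟩
  · rintro ⟨s0, hs0, dm, hdm, rfl⟩; exact ⟨s0, (h s0).2 hs0, dm, hdm, rfl⟩

theorem runL_respect (k p q : ℕ) (trans : List (List ℕ)) :
    ∀ (u : List (ℕ × ℕ)) {l1 l2 : List S1}, (∀ s, s ∈ l1 ↔ s ∈ l2) →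
      ∀ s, s ∈ runL k p q trans l1 u ↔ s ∈ runL k p q trans l2 u
  | [], l1, l2, h => h
  | d :: u, l1, l2, h => by
    exact runL_respect k p q trans u (stepL_respect k p q trans h d)

theorem occAcc_mem_iff {k p q : ℕ} {trans : List (List ℕ)} {out : List ℕ} {l : List S1} :
    occAcc k p q trans out l = true ↔
      ∀ s ∈ runL k p q trans l (zeros (p+1)), ¬(accept1 k p q trans out s = true) := by
  rw [occAcc, show (ball (runL k p q trans l (zeros (p+1)))
      fun s => !accept1 k p q trans out s) =
    (runL k p q trans l (zeros (p+1))).foldl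
      (fun b x => b && (fun s => !accept1 k p q trans out s) x) true from rfl,
    ball_eq_true']
  simp

theorem occAcc_respect {k p q : ℕ} {trans : List (List ℕ)} {out : List ℕ} {l1 l2 : List S1}
    (h : ∀ s, s ∈ l1 ↔ s ∈ l2) :
    occAcc k p q trans out l1 = occAcc k p q trans out l2 := by
  rw [Bool.eq_iff_iff, occAcc_mem_iff, occAcc_mem_iff]
  constructor
  · intro hh s hs
    exact hh s ((runL_respect k p q trans (zeros (p+1)) h s).2 hs)
  · intro hh s hs
    exact hh s ((runL_respect k p q trans (zeros (p+1)) h s).1 hs)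

theorem memb_iff {s : S1} {l : List S1} : memb s l = true ↔ s ∈ l := by
  rw [memb, bany, bany_eq_true]
  constructor
  · rintro ⟨x, hx, hb⟩
    rwa [show x = s from of_decide_eq_true hb] at hx
  · intro h; exact ⟨s, h, by simp⟩

theorem eqv_iff {l1 l2 : List S1} : eqv l1 l2 = true ↔ (∀ s, s ∈ l1 ↔ s ∈ l2) := by
  rw [eqv, Bool.and_eq_true]
  rw [show (ball l1 fun s => memb s l2) = l1.foldl (fun b x => b && (fun s => memb s l2) x) true
      from rfl,
    show (ball l2 fun s => memb s l1) = l2.foldl (fun b x => b && (fun s => memb s l1) x) true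
      from rfl, ball_eq_true', ball_eq_true']
  constructor
  · rintro ⟨h1, h2⟩ s
    constructor
    · intro hs; exact memb_iff.1 (h1 s hs)
    · intro hs; exact memb_iff.1 (h2 s hs)
  · intro h
    exact ⟨fun s hs => memb_iff.2 ((h s).1 hs), fun s hs => memb_iff.2 ((h s).2 hs)⟩

theorem toFinset_mem_iff {l1 l2 : List S1} (h : l1.toFinset = l2.toFinset) :
    ∀ s, s ∈ l1 ↔ s ∈ l2 := by
  intro s
  rw [← List.mem_toFinset, ← List.mem_toFinset, h]

/-! words -/

theorem mem_letters {k : ℕ} {d : ℕ × ℕ} : d ∈ letters k ↔ d.1 < k ∧ d.2 < k := by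
  rcases d with ⟨x, y⟩
  simp only [letters, List.mem_flatMap, List.mem_map, List.mem_range]
  constructor
  · rintro ⟨a, ha, b, hb, h⟩
    rw [Prod.mk.injEq] at h
    obtain ⟨rfl, rfl⟩ := h
    exact ⟨ha, hb⟩
  · rintro ⟨h1, h2⟩; exact ⟨x, h1, y, h2, rfl⟩

theorem mem_words {k : ℕ} : ∀ {n : ℕ} {u : List (ℕ × ℕ)},
    u ∈ words k n ↔ (u.length ≤ n ∧ ∀ d ∈ u, d.1 < k ∧ d.2 < k) := by
  intro n
  induction n with
  | zero =>
    intro u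
    simp only [words, List.mem_singleton]
    constructor
    · rintro rfl; simp
    · rintro ⟨h1, _⟩
      rw [List.length_eq_zero_iff.1 (show u.length = 0 by omega)]
  | succ n IH =>
    intro u
    simp only [words, List.mem_cons, List.mem_flatMap, List.mem_map]
    constructor
    · rintro (rfl | ⟨w, hw, d, hd, rfl⟩)
      · simp
      · rcases IH.1 hw with ⟨h1, h2⟩
        refine ⟨by simpa using Nat.succ_le_succ h1, ?_⟩
        intro x hx
        rcases List.mem_cons.1 hx with rfl | hx
        · exact mem_letters.1 hd
        · exact h2 x hx
    · rintro ⟨h1, h2⟩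
      rcases u with _ | ⟨d, w⟩
      · left; rfl
      · right
        refine ⟨w, IH.2 ⟨by simpa using h1, fun x hx => h2 x (List.mem_cons_of_mem _ hx)⟩,
          d, mem_letters.2 (h2 d (by simp)), rfl⟩

/-! pigeonhole and shrink -/

theorem Fset_card_le {p q q0 : ℕ} {trans : List (List ℕ)} :
    (Fset p q q0 trans).card ≤ 2 * ((p+q+2) * (nQ trans q0 * (nQ trans q0 * 2))) := by
  have hQ : (Qset trans q0).card ≤ nQ trans q0 := List.toFinset_card_le _
  simp only [Fset, Finset.card_product, Finset.card_range, Finset.card_univ, Fintype.card_bool]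
  have := Nat.mul_le_mul hQ (Nat.mul_le_mul hQ (le_refl 2))
  have := Nat.mul_le_mul (le_refl (p+q+2)) this
  exact Nat.mul_le_mul (le_refl 2) this

theorem powerset_card_lt {p q q0 : ℕ} {trans : List (List ℕ)} :
    (Fset p q q0 trans).powerset.card < bigN p q q0 trans + 1 := by
  rw [Finset.card_powerset]
  have : 2 ^ (Fset p q q0 trans).card ≤ bigN p q q0 trans :=
    Nat.pow_le_pow_right (by omega) Fset_card_le
  omega

theorem pigeonhole {k p q q0 t0 : ℕ} {trans : List (List ℕ)} (hk : 2 ≤ k) (hq : 1 ≤ q)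
    (hqp : q < p) (ht0 : t0 ≤ p+q+1)
    (w : List (ℕ × ℕ)) (hw : ∀ d ∈ w, d.1 < k ∧ d.2 < k)
    (l : List S1) (hl : ∀ s ∈ l, s ∈ Fset p q q0 trans) :
    ∃ c d : ℕ, c < d ∧ d ≤ bigN p q q0 trans ∧
      (runL k p q trans l (w.take c)).toFinset = (runL k p q trans l (w.take d)).toFinset := by
  have hmap : ∀ j ∈ Finset.range (bigN p q q0 trans + 1),
      (runL k p q trans l (w.take j)).toFinset ∈ (Fset p q q0 trans).powerset := by
    intro j _
    rw [Finset.mem_powerset]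
    intro s hs
    rw [List.mem_toFinset] at hs
    exact runL_mem_Fset hk hq hqp (w.take j)
      (fun d hd => hw d (List.mem_of_mem_take hd)) l hl s hs
  have hcard : (Fset p q q0 trans).powerset.card < (Finset.range (bigN p q q0 trans + 1)).card := by
    rw [Finset.card_range]; exact powerset_card_lt
  rcases Finset.exists_ne_map_eq_of_card_lt_of_maps_to hcard hmap with ⟨x, hx, y, hy, hxy, hmapeq⟩
  rcases Nat.lt_or_ge x y with h | h
  · exact ⟨x, y, h, by simp only [Finset.mem_range] at hy; omega, hmapeq⟩
  · have : y < x := by omega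
    exact ⟨y, x, this, by simp only [Finset.mem_range] at hx; omega, hmapeq.symm⟩

theorem shrink {k p q q0 t0 : ℕ} {trans : List (List ℕ)} (hk : 2 ≤ k) (hq : 1 ≤ q)
    (hqp : q < p) (ht0 : t0 ≤ p+q+1) :
    ∀ (n : ℕ) (w : List (ℕ × ℕ)), w.length ≤ n → (∀ d ∈ w, d.1 < k ∧ d.2 < k) →
    ∀ (l : List S1), (∀ s ∈ l, s ∈ Fset p q q0 trans) →
      ∃ w' : List (ℕ × ℕ), (∀ d ∈ w', d.1 < k ∧ d.2 < k) ∧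
        w'.length ≤ bigN p q q0 trans ∧
        (runL k p q trans l w').toFinset = (runL k p q trans l w).toFinset := by
  intro n
  induction n with
  | zero =>
    intro w hw hdig l hl
    exact ⟨w, hdig, by omega, rfl⟩
  | succ n IH =>
    intro w hw hdig l hl
    rcases Nat.lt_or_ge (bigN p q q0 trans) w.length with hlong | hshort
    · rcases pigeonhole (t0 := t0) hk hq hqp ht0 w hdig l hl with ⟨c, d, hcd, hdB, heq⟩
      set w2 := w.take c ++ w.drop d with hw2
      have hw2dig : ∀ x ∈ w2, x.1 < k ∧ x.2 < k := by
        intro x hx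
        rcases List.mem_append.1 hx with h | h
        · exact hdig x (List.mem_of_mem_take h)
        · exact hdig x (List.mem_of_mem_drop h)
      have hw2run : (runL k p q trans l w2).toFinset = (runL k p q trans l w).toFinset := by
        rw [hw2, runL_append]
        have h1 : ∀ s, s ∈ runL k p q trans l (w.take c) ↔
            s ∈ runL k p q trans l (w.take d) := toFinset_mem_iff heq
        have h2 := fun s => runL_respect k p q trans (w.drop d) h1 s
        have h3 : runL k p q trans (runL k p q trans l (w.take d)) (w.drop d)
            = runL k p q trans l w := by
          rw [← runL_append, List.take_append_drop]
        apply Finset.ext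
        intro s
        rw [List.mem_toFinset, List.mem_toFinset, h2 s, h3]
      have hw2len : w2.length ≤ n := by
        have h1 : (w.take c).length = c := by
          rw [List.length_take]; omega
        have h2 : (w.drop d).length = w.length - d := by rw [List.length_drop]
        rw [hw2, List.length_append, h1, h2]
        omega
      rcases IH w2 hw2len hw2dig l hl with ⟨w', hd', hl', he'⟩
      exact ⟨w', hd', hl', he'.trans hw2run⟩
    · exact ⟨w, hdig, hshort, rfl⟩

/-! wrappers -/

theorem bany_true {α : Type} {l : List α} {f : α → Bool} :
    bany l f = true ↔ ∃ x ∈ l, f x = true := by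
  rw [bany]; exact bany_eq_true

/-! list helpers -/

theorem pref_eq_take (u : List (ℕ × ℕ)) (c : ℕ) (hc : c ≤ u.length) :
    pref u c = u.take c := by
  apply List.ext_getElem
  · simp [pref, List.length_take]; omega
  · intro i h1 h2
    simp only [pref, List.length_map, List.length_range] at h1
    simp only [pref, List.getElem_map, List.getElem_range, List.getElem_take]
    exact List.getD_eq_getElem _ _ (by omega)

theorem getD_drop' (l : List (ℕ × ℕ)) (c i : ℕ) :
    (l.drop c).getD i (0,0) = l.getD (c+i) (0,0) := by
  rcases Nat.lt_or_ge (c+i) l.length with h | h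
  · rw [List.getD_eq_getElem _ _ (show i < (l.drop c).length by rw [List.length_drop]; omega),
      List.getD_eq_getElem _ _ h]
    rw [List.getElem_drop]
  · rw [List.getD_eq_default _ _ (by rw [List.length_drop]; omega), List.getD_eq_default _ _ h]

theorem mapFst_getD (u : List (ℕ × ℕ)) (i : ℕ) (h : i < u.length) :
    (u.map Prod.fst).getD i 0 = (u.getD i (0,0)).1 := by
  rw [List.getD_eq_getElem _ _ (by rw [List.length_map]; omega),
    List.getD_eq_getElem _ _ h, List.getElem_map]

def repw (y : List (ℕ × ℕ)) : ℕ → List (ℕ × ℕ)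
  | 0 => []
  | m+1 => y ++ repw y m

theorem repw_length (y : List (ℕ × ℕ)) : ∀ m, (repw y m).length = m * y.length
  | 0 => by simp [repw]
  | m+1 => by
    rw [repw, List.length_append, repw_length y m]; ring

theorem repw_mem {y : List (ℕ × ℕ)} {d : ℕ × ℕ} : ∀ {m}, d ∈ repw y m → d ∈ y := by
  intro m
  induction m with
  | zero => intro h; simp [repw] at h
  | succ m IH =>
    intro h
    rcases List.mem_append.1 h with h | h
    · exact h
    · exact IH h

theorem runL_repw (k p q : ℕ) (trans : List (List ℕ)) (l : List S1)
    (x y : List (ℕ × ℕ))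
    (h : ∀ s, s ∈ runL k p q trans l (x ++ y) ↔ s ∈ runL k p q trans l x) :
    ∀ m s, s ∈ runL k p q trans l (x ++ repw y m) ↔ s ∈ runL k p q trans l x := by
  intro m
  induction m with
  | zero => intro s; rw [repw, List.append_nil]
  | succ m IH =>
    intro s
    have e1 : x ++ repw y (m+1) = (x ++ y) ++ repw y m := by
      rw [repw, List.append_assoc]
    rw [e1, runL_append]
    have h2 := runL_respect k p q trans (repw y m) h s
    rw [h2, ← runL_append]
    exact IH s

/-! soundness of the decision procedure -/

theorem decider_sound (k p q t0 q0 : ℕ) (trans : List (List ℕ)) (out : List ℕ)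
    (a : ℕ → ℕ) (hk : 2 ≤ k) (hq : 1 ≤ q) (hqp : q < p) (ht0 : t0 ≤ p+q+1)
    (hgen : dfaoGenerates k trans q0 out a)
    (hdec : decider k p q t0 q0 trans out = true) :
    ∀ n : ℕ, ∃ T i : ℕ, n ≤ T ∧ Occ a p q t0 i T := by
  intro n
  rw [decider, bany_true] at hdec
  rcases hdec with ⟨u, humem, hcheck⟩
  obtain ⟨hulen, hudig⟩ := mem_words.1 humem
  rw [check, Bool.and_eq_true] at hcheck
  obtain ⟨hocc, hrest⟩ := hcheck
  rw [bany_true] at hrest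
  obtain ⟨d2, hd2r, hrest⟩ := hrest
  rw [bany_true] at hrest
  obtain ⟨c, hcr, hrest⟩ := hrest
  rw [Bool.and_eq_true] at hrest
  obtain ⟨heqv, hrest⟩ := hrest
  rw [bany_true] at hrest
  obtain ⟨j, hjr, hj⟩ := hrest
  rw [Bool.and_eq_true, decide_eq_true_eq, decide_eq_true_eq] at hj
  obtain ⟨hcj, hjnz⟩ := hj
  rw [List.mem_range] at hd2r hcr hjr
  have hcu : c ≤ u.length := by omega
  have hd2u : d2 ≤ u.length := by omega
  rw [pref_eq_take u c (by omega), pref_eq_take u d2 (by omega)] at heqv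
  have hloop0 := eqv_iff.1 heqv
  have hxy0 : u.take d2 = u.take c ++ (u.drop c).take (d2 - c) := by
    conv_lhs => rw [show d2 = c + (d2 - c) by omega]
    rw [List.take_add]
  set x := u.take c with hxdef
  set y := (u.drop c).take (d2 - c) with hydef
  set z := u.drop c with hzdef
  have hxy : u.take d2 = x ++ y := hxy0
  have hxlen : x.length = c := by rw [hxdef, List.length_take]; omega
  have hylen : y.length = d2 - c := by
    rw [hydef, List.length_take, List.length_drop]; omega
  have hloop : ∀ s, s ∈ runL k p q trans [init1 t0 q0] (x ++ y) ↔
      s ∈ runL k p q trans [init1 t0 q0] x := by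
    intro s; rw [← hxy]; exact (hloop0 s).symm
  set um := x ++ repw y n ++ z with humdef
  have humdig : ∀ d ∈ um, d.1 < k ∧ d.2 < k := by
    intro d hd
    rcases List.mem_append.1 hd with h | h
    · rcases List.mem_append.1 h with h | h
      · exact hudig d (List.mem_of_mem_take h)
      · exact hudig d (List.mem_of_mem_drop (List.mem_of_mem_take (repw_mem h)))
    · exact hudig d (List.mem_of_mem_drop h)
  have hmemiff : ∀ s, s ∈ runL k p q trans [init1 t0 q0] um ↔
      s ∈ runL k p q trans [init1 t0 q0] u := by
    intro s
    have h1 := runL_repw k p q trans [init1 t0 q0] x y hloop n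
    rw [humdef, runL_append]
    have h2 := runL_respect k p q trans z (h1) s
    rw [h2, ← runL_append]
    rw [show x ++ z = u from by rw [hxdef, hzdef, List.take_append_drop]]
  have hoccm : occAcc k p q trans out (runL k p q trans [init1 t0 q0] um) = true := by
    rw [occAcc_respect hmemiff]; exact hocc
  have hOcc := (occAcc_iff k p q trans out q0 t0 a hk hq hqp hgen um humdig).1 hoccm
  set pos := j + n * y.length with hposdef
  have hzlen : z.length = u.length - c := by rw [hzdef, List.length_drop]
  have humlen : um.length = u.length + n * y.length := by
    rw [humdef, List.length_append, List.length_append, hxlen, repw_length, hzlen]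
    omega
  have hposlt : pos < um.length := by omega
  have hgetD : um.getD pos (0,0) = u.getD j (0,0) := by
    have hxr : (x ++ repw y n).length = c + n * y.length := by
      rw [List.length_append, hxlen, repw_length]
    rw [humdef, List.getD_append_right _ _ _ _ (by rw [hxr]; omega)]
    rw [hxr, hzdef, getD_drop']
    congr 1
    omega
  have hTge : k ^ pos ≤ TvU k um := by
    rw [TvU]
    apply ofDigits_ge_of_getD hk
    rw [mapFst_getD um pos hposlt, hgetD]
    exact hjnz
  have hy1 : 1 ≤ y.length := by omega
  have hTn : n ≤ TvU k um := by
    have e1 : n ≤ 2 ^ n := (Nat.lt_two_pow_self).le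
    have e2 : (2:ℕ) ^ n ≤ k ^ n := Nat.pow_le_pow_left (by omega) _
    have e3 : k ^ n ≤ k ^ pos := Nat.pow_le_pow_right (by omega)
      (by rw [hposdef]; calc n = n * 1 := by ring
                          _ ≤ n * y.length := Nat.mul_le_mul_left _ hy1
                          _ ≤ j + n * y.length := by omega)
    omega
  exact ⟨TvU k um, IvU k um, hTn, hOcc⟩

theorem dig_getD_lt {k : ℕ} (hk : 2 ≤ k) (m j : ℕ) : (Nat.digits k m).getD j 0 < k := by
  rcases Nat.lt_or_ge j (Nat.digits k m).length with h | h
  · rw [List.getD_eq_getElem _ _ h]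
    exact Nat.digits_lt_base (by omega) (List.getElem_mem h)
  · rw [List.getD_eq_default _ _ h]; omega

/-! completeness of the decision procedure -/

theorem decider_complete (k p q t0 q0 : ℕ) (trans : List (List ℕ)) (out : List ℕ)
    (a : ℕ → ℕ) (hk : 2 ≤ k) (hq : 1 ≤ q) (hqp : q < p) (ht0 : t0 ≤ p+q+1)
    (hgen : dfaoGenerates k trans q0 out a)
    (hU : ∀ n : ℕ, ∃ T i : ℕ, n ≤ T ∧ Occ a p q t0 i T) :
    decider k p q t0 q0 trans out = true := by
  rcases hU (k ^ (bigN p q q0 trans)) with ⟨T, i, hTge, hOcc⟩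
  set B := bigN p q q0 trans with hBdef
  set nn := max (Nat.digits k T).length (Nat.digits k i).length with hnndef
  set u := (List.range nn).map
    (fun j => ((Nat.digits k T).getD j 0, (Nat.digits k i).getD j 0)) with hudef
  have hudig : ∀ d ∈ u, d.1 < k ∧ d.2 < k := by
    intro d hd
    rcases List.mem_map.1 hd with ⟨j, _, rfl⟩
    exact ⟨dig_getD_lt hk T j, dig_getD_lt hk i j⟩
  have huT : TvU k u = T := by
    rw [TvU, hudef, List.map_map]
    rw [show ((fun x : ℕ × ℕ => x.1) ∘ fun j => ((Nat.digits k T).getD j 0,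
      (Nat.digits k i).getD j 0)) = fun j => (Nat.digits k T).getD j 0 from rfl]
    rw [ofDigits_range_getD k _ nn (le_max_left _ _), Nat.ofDigits_digits]
  have huI : IvU k u = i := by
    rw [IvU, hudef, List.map_map]
    rw [show ((fun x : ℕ × ℕ => x.2) ∘ fun j => ((Nat.digits k T).getD j 0,
      (Nat.digits k i).getD j 0)) = fun j => (Nat.digits k i).getD j 0 from rfl]
    rw [ofDigits_range_getD k _ nn (le_max_right _ _), Nat.ofDigits_digits]
  have hlenu : u.length = nn := by rw [hudef]; simp
  have hoccu : occAcc k p q trans out (runL k p q trans [init1 t0 q0] u) = true := by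
    rw [occAcc_iff k p q trans out q0 t0 a hk hq hqp hgen u hudig, huT, huI]
    exact hOcc
  have hTne : T ≠ 0 := by
    have : 1 ≤ k ^ B := Nat.one_le_pow _ _ (by omega)
    omega
  have hLge : B + 1 ≤ (Nat.digits k T).length := by
    by_contra hcon
    push_neg at hcon
    have := (digits_len_le_iff hk).1 (show (Nat.digits k T).length ≤ B by omega)
    omega
  set P := (Nat.digits k T).length - 1 with hPdef
  have hPge : B ≤ P := by omega
  have hPltu : P < u.length := by
    rw [hlenu, hnndef]
    have := le_max_left (Nat.digits k T).length (Nat.digits k i).length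
    omega
  have hgetP : (u.getD P (0,0)).1 ≠ 0 := by
    have h1 : u.getD P (0,0) = ((Nat.digits k T).getD P 0, (Nat.digits k i).getD P 0) := by
      rw [List.getD_eq_getElem _ _ hPltu]
      simp [hudef]
    rw [h1]
    have hne : Nat.digits k T ≠ [] := Nat.digits_ne_nil_iff_ne_zero.2 hTne
    have h2 := Nat.getLast_digit_ne_zero k hTne
    rw [List.getLast_eq_getElem] at h2
    rw [List.getD_eq_getElem _ _ (show P < (Nat.digits k T).length by omega)]
    exact h2
  have hinitF : ∀ s ∈ [init1 t0 q0], s ∈ Fset p q q0 trans := by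
    intro s hs
    rw [List.mem_singleton] at hs
    rw [hs]
    exact init1_mem ht0
  rcases pigeonhole (t0 := t0) hk hq hqp ht0 u hudig [init1 t0 q0] hinitF with
    ⟨c, d, hcd, hdB, heqcd⟩
  have hdP : d ≤ P := by omega
  have htaked : (u.take d).length = d := by rw [List.length_take]; omega
  set z1 := (u.drop d).take (P - d) with hz1def
  set wP := u.getD P (0,0) with hwPdef
  set z2 := u.drop (P+1) with hz2def
  have hz1len : z1.length = P - d := by
    rw [hz1def, List.length_take, List.length_drop]; omega
  have hsplit : u = u.take d ++ (z1 ++ (wP :: z2)) := by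
    have e1 : z1 ++ (u.drop d).drop (P - d) = u.drop d := by
      rw [hz1def, List.take_append_drop]
    have e2 : (u.drop d).drop (P - d) = u.drop P := by
      rw [List.drop_drop]
      congr 1; omega
    have e3 : u.drop P = wP :: z2 := by
      rw [List.drop_eq_getElem_cons hPltu, hz2def, hwPdef,
        List.getD_eq_getElem _ _ hPltu]
    have e4 : u.drop d = z1 ++ (wP :: z2) := by
      conv_lhs => rw [← e1]
      rw [e2, e3]
    calc u = u.take d ++ u.drop d := (List.take_append_drop d u).symm
    _ = u.take d ++ (z1 ++ (wP :: z2)) := by rw [e4]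
  have hz1dig : ∀ x ∈ z1, x.1 < k ∧ x.2 < k := by
    intro x hx
    exact hudig x (List.mem_of_mem_drop (List.mem_of_mem_take hx))
  have hz2dig : ∀ x ∈ z2, x.1 < k ∧ x.2 < k := by
    intro x hx
    exact hudig x (List.mem_of_mem_drop hx)
  have hwPdig : wP.1 < k ∧ wP.2 < k := by
    rw [hwPdef, List.getD_eq_getElem _ _ hPltu]
    exact hudig _ (List.getElem_mem hPltu)
  set lA := runL k p q trans [init1 t0 q0] (u.take d) with hlAdef
  have hlAF : ∀ s ∈ lA, s ∈ Fset p q q0 trans := by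
    rw [hlAdef]
    exact runL_mem_Fset hk hq hqp (u.take d)
      (fun x hx => hudig x (List.mem_of_mem_take hx)) _ hinitF
  rcases shrink (t0 := t0) hk hq hqp ht0 z1.length z1 (le_refl _) hz1dig lA hlAF with
    ⟨z1', hz1'dig, hz1'len, hz1'run⟩
  set l2 := runL k p q trans (runL k p q trans lA z1) [wP] with hl2def
  have hwPl : ∀ x ∈ [wP], x.1 < k ∧ x.2 < k := by
    intro x hx
    rw [List.mem_singleton] at hx
    rw [hx]
    exact hwPdig
  have hl2F : ∀ s ∈ l2, s ∈ Fset p q q0 trans := by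
    rw [hl2def]
    exact runL_mem_Fset hk hq hqp [wP] hwPl _
      (runL_mem_Fset hk hq hqp z1 hz1dig lA hlAF)
  rcases shrink (t0 := t0) hk hq hqp ht0 z2.length z2 (le_refl _) hz2dig l2 hl2F with
    ⟨z2', hz2'dig, hz2'len, hz2'run⟩
  set u' := u.take d ++ (z1' ++ (wP :: z2')) with hu'def
  have hu'dig : ∀ x ∈ u', x.1 < k ∧ x.2 < k := by
    intro x hx
    rcases List.mem_append.1 hx with h | h
    · exact hudig x (List.mem_of_mem_take h)
    · rcases List.mem_append.1 h with h | h
      · exact hz1'dig x h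
      · rcases List.mem_cons.1 h with rfl | h
        · exact hwPdig
        · exact hz2'dig x h
  have hmemiff : ∀ s, s ∈ runL k p q trans [init1 t0 q0] u' ↔
      s ∈ runL k p q trans [init1 t0 q0] u := by
    intro s
    have e1 : runL k p q trans [init1 t0 q0] u'
        = runL k p q trans (runL k p q trans (runL k p q trans lA z1') [wP]) z2' := by
      rw [hu'def, runL_append, ← hlAdef, show z1' ++ (wP :: z2') = (z1' ++ [wP]) ++ z2' by simp,
        runL_append, runL_append]
    have e2 : runL k p q trans [init1 t0 q0] u
        = runL k p q trans (runL k p q trans (runL k p q trans lA z1) [wP]) z2 := by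
      conv_lhs => rw [hsplit]
      rw [runL_append, ← hlAdef, show z1 ++ (wP :: z2) = (z1 ++ [wP]) ++ z2 by simp,
        runL_append, runL_append]
    rw [e1, e2]
    have m1 := toFinset_mem_iff hz1'run
    have m2 := stepL_respect k p q trans m1 wP
    have m2' : ∀ s, s ∈ runL k p q trans (runL k p q trans lA z1') [wP] ↔ s ∈ l2 := by
      intro s'
      rw [hl2def]
      exact runL_respect k p q trans [wP] m1 s'
    have m3 := runL_respect k p q trans z2' m2'
    have m4 := toFinset_mem_iff hz2'run
    rw [m3 s, ← hl2def]
    exact m4 s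
  have hocc' : occAcc k p q trans out (runL k p q trans [init1 t0 q0] u') = true := by
    rw [occAcc_respect hmemiff]
    exact hoccu
  have hu'len : u'.length = d + z1'.length + 1 + z2'.length := by
    rw [hu'def, List.length_append, List.length_append, List.length_cons, htaked]
    omega
  have hu'B : u'.length ≤ 3 * B + 3 := by omega
  rw [decider, bany_true]
  refine ⟨u', mem_words.2 ⟨hu'B, hu'dig⟩, ?_⟩
  rw [check, Bool.and_eq_true]
  refine ⟨hocc', ?_⟩
  rw [bany_true]
  refine ⟨d, by rw [List.mem_range]; omega, ?_⟩
  rw [bany_true]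
  refine ⟨c, by rw [List.mem_range]; omega, ?_⟩
  rw [Bool.and_eq_true]
  constructor
  · have hc_u' : u'.take c = u.take c := by
      rw [hu'def, List.take_append, htaked,
        show c - d = 0 by omega, List.take_zero, List.append_nil, List.take_take,
        show min c d = c by omega]
    have hd_u' : u'.take d = u.take d := by
      rw [hu'def, List.take_append, htaked,
        show d - d = 0 by omega, List.take_zero, List.append_nil, List.take_take,
        show min d d = d by omega]
    rw [pref_eq_take u' c (by omega), pref_eq_take u' d (by omega), hc_u', hd_u']
    exact eqv_iff.2 (toFinset_mem_iff heqcd)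
  · rw [bany_true]
    refine ⟨d + z1'.length, by rw [List.mem_range]; omega, ?_⟩
    rw [Bool.and_eq_true, decide_eq_true_eq, decide_eq_true_eq]
    refine ⟨by omega, ?_⟩
    have hgd : u'.getD (d + z1'.length) (0,0) = wP := by
      rw [hu'def, show u.take d ++ (z1' ++ (wP :: z2')) = (u.take d ++ z1') ++ (wP :: z2')
        by simp, List.getD_append_right _ _ _ _
          (by rw [List.length_append, htaked])]
      rw [List.length_append, htaked, Nat.sub_self]
      rfl
    rw [hgd]
    exact hgetP

/-! relating Occ to r-power factors -/

theorem factorAt_length (a : ℕ → ℕ) (i L : ℕ) : (factorAt a i L).length = L := by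
  simp [factorAt]

theorem factorAt_getD (a : ℕ → ℕ) (i L j : ℕ) (h : j < L) :
    (factorAt a i L).getD j 0 = a (i + j) := by
  rw [List.getD_eq_getElem _ _ (by rw [factorAt_length]; omega)]
  simp [factorAt]

theorem aval_mem {k : ℕ} {trans : List (List ℕ)} {q0 : ℕ} {out : List ℕ} {a : ℕ → ℕ}
    (hk : 2 ≤ k) (hgen : dfaoGenerates k trans q0 out a) :
    ∀ m, a m ∈ (0 :: out : List ℕ) := by
  intro m
  have h := hgen m (Nat.digits k m) (fun d hd => Nat.digits_lt_base (by omega) hd)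
    (Nat.ofDigits_digits k m)
  rw [h]
  rcases Nat.lt_or_ge (dfaoRun trans q0 (Nat.digits k m)) out.length with hlt | hge
  · rw [List.getD_eq_getElem _ _ hlt]
    exact List.mem_cons_of_mem _ (List.getElem_mem hlt)
  · rw [List.getD_eq_default _ _ hge]
    exact List.mem_cons_self

theorem finite_bounded_lists (S : List ℕ) :
    ∀ B : ℕ, {w : List ℕ | (∀ x ∈ w, x ∈ S) ∧ w.length ≤ B}.Finite
  | 0 => by
    apply Set.Finite.subset (Set.finite_singleton ([] : List ℕ))
    rintro w ⟨_, hlen⟩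
    rw [Set.mem_singleton_iff]
    exact List.length_eq_zero_iff.1 (by omega)
  | B+1 => by
    have h1 := finite_bounded_lists S B
    have h2 : ({x | x ∈ S} ×ˢ {w : List ℕ | (∀ x ∈ w, x ∈ S) ∧ w.length ≤ B}).Finite :=
      Set.Finite.prod (List.finite_toSet S) h1
    apply Set.Finite.subset (Set.Finite.insert [] (h2.image fun pr => pr.1 :: pr.2))
    rintro w ⟨hmem, hlen⟩
    rcases w with _ | ⟨x, w'⟩
    · exact Set.mem_insert _ _
    · right
      refine ⟨(x, w'), ⟨hmem x (by simp), fun y hy => hmem y (List.mem_cons_of_mem _ hy),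
        by simpa using hlen⟩, rfl⟩

theorem infinite_of_unbounded {S : Set (List ℕ)} (h : ∀ n, ∃ w ∈ S, n ≤ w.length) :
    S.Infinite := by
  by_contra hfin
  rw [Set.not_infinite] at hfin
  have himg : (List.length '' S).Finite := hfin.image _
  rcases himg.bddAbove with ⟨N, hN⟩
  rcases h (N+1) with ⟨w, hw, hlen⟩
  have : w.length ≤ N := hN ⟨w, hw, rfl⟩
  omega

/-- from an occurrence, an r-power factor -/
theorem occ_to_rpower {a : ℕ → ℕ} {p q T i : ℕ} (hq : 1 ≤ q) (hqp : q < p) (hT : 1 ≤ T)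
    (hOcc : Occ a p q (p+1) i T) :
    ∃ z : List ℕ, (IsFactorOf a z ∧ IsRPower p q z) ∧ T < z.length := by
  set L := (p*T + (q-1))/q with hLdef
  have e5 : p*T ≤ q*L := by
    have := (ceil_le_iff hq (p*T) L).1 (le_of_eq hLdef.symm)
    exact this
  have e6 : q*L ≤ p*T + (q-1) := by
    rw [hLdef, Nat.mul_comm]
    exact Nat.div_mul_le_self _ _
  have e3 : (p-q)*T + q*T = p*T := by rw [← Nat.add_mul]; congr 1; omega
  have hqTpT : q*T < p*T := by
    apply Nat.mul_lt_mul_of_lt_of_le hqp (le_refl T) (by omega)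
  have hTL : T < L := by
    have : q*T < q*L := by omega
    exact Nat.lt_of_mul_lt_mul_left this
  have hL1 : 1 ≤ L := by omega
  have e4 : q*(L-1) + q = q*L := by rw [← Nat.mul_succ]; congr 1; omega
  refine ⟨factorAt a i L, ⟨⟨i, by rw [factorAt_length]⟩, ⟨T, hT, ?_, ?_, ?_, ?_⟩⟩, ?_⟩
  · rw [factorAt_length]; omega
  · intro j hj
    rw [factorAt_length] at hj
    rw [factorAt_getD a i L j (by omega), factorAt_getD a i L (j+T) (by omega)]
    have e7 : q*(j+T) ≤ q*(L-1) := Nat.mul_le_mul_left _ (by omega)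
    have e8 : q*(j+T) = q*j + q*T := by ring
    have e2 : q*(i+j) = q*i + q*j := by ring
    rw [← Nat.add_assoc]
    exact hOcc (i+j) (by omega) (by omega)
  · rw [factorAt_length]; omega
  · rw [factorAt_length]; omega
  · rw [factorAt_length]; omega

/-- from an r-power factor, an occurrence -/
theorem rpower_to_occ {a : ℕ → ℕ} {p q : ℕ} {w : List ℕ} (hq : 1 ≤ q) (hqp : q < p)
    (hfac : IsFactorOf a w) (hpow : IsRPower p q w) :
    ∃ T i, (1 ≤ T ∧ q * (w.length - 1) < p * T) ∧ Occ a p q (p+1) i T := by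
  rcases hfac with ⟨i, hw⟩
  rcases hpow with ⟨T, hT1, hTlen, hper, hle, hlt⟩
  refine ⟨T, i, ⟨hT1, hlt⟩, ?_⟩
  intro m him hlin
  set j := m - i with hjdef
  have hm : m = i + j := by omega
  have e2 : q*(i+j) = q*i + q*j := by ring
  have e3 : (p-q)*T + q*T = p*T := by rw [← Nat.add_mul]; congr 1; omega
  have e8 : q*(j+T) = q*j + q*T := by ring
  have hjT : j + T < w.length := by
    have h1 : q*(j+T) < p*T := by
      rw [hm, e2] at hlin
      omega
    have h2 : q*(j+T) < q*w.length := by omega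
    exact Nat.lt_of_mul_lt_mul_left h2
  have := hper j hjT
  rw [hw, factorAt_getD a i w.length j (by omega),
    factorAt_getD a i w.length (j+T) (by omega)] at this
  rw [hm, Nat.add_assoc]
  exact this

/-- from an occurrence, an r⁺-power factor -/
theorem occ_to_rpluspower {a : ℕ → ℕ} {p q T i : ℕ} (hq : 1 ≤ q) (hqp : q < p) (hT : 1 ≤ T)
    (hOcc : Occ a p q p i T) :
    ∃ z : List ℕ, (IsFactorOf a z ∧ IsRPlusPower p q z) ∧ T < z.length := by
  set L := p*T/q + 1 with hLdef
  have e6 : q*(L-1) ≤ p*T := by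
    rw [hLdef]
    simp only [Nat.add_sub_cancel]
    rw [Nat.mul_comm]
    exact Nat.div_mul_le_self _ _
  have hdm := Nat.div_add_mod (p*T) q
  have hmod : p*T % q < q := Nat.mod_lt _ (by omega)
  have e5 : p*T < q*L := by
    rw [hLdef, Nat.mul_add, Nat.mul_one]
    omega
  have hTL : T ≤ L - 1 := by
    rw [hLdef]
    simp only [Nat.add_sub_cancel]
    rw [Nat.le_div_iff_mul_le (by omega : 0 < q)]
    calc T * q = q * T := by ring
    _ ≤ p * T := Nat.mul_le_mul_right _ (by omega)
  have hL1 : 1 ≤ L := by omega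
  have e3 : (p-q)*T + q*T = p*T := by rw [← Nat.add_mul]; congr 1; omega
  refine ⟨factorAt a i L, ⟨⟨i, by rw [factorAt_length]⟩, ⟨T, hT, ?_, ?_, ?_, ?_⟩⟩, ?_⟩
  · rw [factorAt_length]; omega
  · intro j hj
    rw [factorAt_length] at hj
    rw [factorAt_getD a i L j (by omega), factorAt_getD a i L (j+T) (by omega)]
    have e7 : q*(j+T) ≤ q*(L-1) := Nat.mul_le_mul_left _ (by omega)
    have e8 : q*(j+T) = q*j + q*T := by ring
    have e2 : q*(i+j) = q*i + q*j := by ring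
    rw [← Nat.add_assoc]
    exact hOcc (i+j) (by omega) (by omega)
  · rw [factorAt_length]; omega
  · rw [factorAt_length]; omega
  · rw [factorAt_length]; omega

/-- from an r⁺-power factor, an occurrence -/
theorem rpluspower_to_occ {a : ℕ → ℕ} {p q : ℕ} {w : List ℕ} (hq : 1 ≤ q) (hqp : q < p)
    (hfac : IsFactorOf a w) (hpow : IsRPlusPower p q w) :
    ∃ T i, (1 ≤ T ∧ q * (w.length - 1) ≤ p * T) ∧ Occ a p q p i T := by
  rcases hfac with ⟨i, hw⟩
  rcases hpow with ⟨T, hT1, hTlen, hper, hlt, hle⟩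
  refine ⟨T, i, ⟨hT1, hle⟩, ?_⟩
  intro m him hlin
  set j := m - i with hjdef
  have hm : m = i + j := by omega
  have e2 : q*(i+j) = q*i + q*j := by ring
  have e3 : (p-q)*T + q*T = p*T := by rw [← Nat.add_mul]; congr 1; omega
  have e8 : q*(j+T) = q*j + q*T := by ring
  have hjT : j + T < w.length := by
    have h1 : q*(j+T) ≤ p*T := by
      rw [hm, e2] at hlin
      omega
    have h2 : q*(j+T) < q*w.length := by omega
    exact Nat.lt_of_mul_lt_mul_left h2
  have := hper j hjT
  rw [hw, factorAt_getD a i w.length j (by omega),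
    factorAt_getD a i w.length (j+T) (by omega)] at this
  rw [hm, Nat.add_assoc]
  exact this

theorem setR_iff {k : ℕ} {trans : List (List ℕ)} {q0 : ℕ} {out : List ℕ} {a : ℕ → ℕ}
    {p q : ℕ} (hk : 2 ≤ k) (hq : 1 ≤ q) (hqp : q < p)
    (hgen : dfaoGenerates k trans q0 out a) :
    {w : List ℕ | IsFactorOf a w ∧ IsRPower p q w}.Infinite ↔
      (∀ n : ℕ, ∃ T i : ℕ, n ≤ T ∧ Occ a p q (p+1) i T) := by
  constructor
  · intro hinf n
    have hsub : ∃ w ∈ {w : List ℕ | IsFactorOf a w ∧ IsRPower p q w},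
        p*n + 2 ≤ w.length := by
      by_contra hcon
      push_neg at hcon
      apply hinf
      apply Set.Finite.subset (finite_bounded_lists (0 :: out) (p*n + 1))
      rintro w ⟨hfac, hpow⟩
      refine ⟨?_, by have := hcon w ⟨hfac, hpow⟩; omega⟩
      intro x hx
      rcases hfac with ⟨i, hw⟩
      rw [hw] at hx
      rcases List.mem_map.1 hx with ⟨j, _, rfl⟩
      exact aval_mem hk hgen _
    rcases hsub with ⟨w, hwmem, hwlen⟩
    rcases rpower_to_occ hq hqp hwmem.1 hwmem.2 with ⟨T, i, ⟨hT1, hTlt⟩, hOcc⟩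
    refine ⟨T, i, ?_, hOcc⟩
    have h1 : w.length - 1 ≤ q * (w.length - 1) := Nat.le_mul_of_pos_left _ (by omega)
    have h2 : p*n < p*T := by omega
    have := Nat.lt_of_mul_lt_mul_left h2
    omega
  · intro hU
    apply infinite_of_unbounded
    intro n
    rcases hU (n+1) with ⟨T, i, hTn, hOcc⟩
    rcases occ_to_rpower hq hqp (by omega) hOcc with ⟨z, hz, hzlen⟩
    exact ⟨z, hz, by omega⟩

theorem setP_iff {k : ℕ} {trans : List (List ℕ)} {q0 : ℕ} {out : List ℕ} {a : ℕ → ℕ}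
    {p q : ℕ} (hk : 2 ≤ k) (hq : 1 ≤ q) (hqp : q < p)
    (hgen : dfaoGenerates k trans q0 out a) :
    {w : List ℕ | IsFactorOf a w ∧ IsRPlusPower p q w}.Infinite ↔
      (∀ n : ℕ, ∃ T i : ℕ, n ≤ T ∧ Occ a p q p i T) := by
  constructor
  · intro hinf n
    have hsub : ∃ w ∈ {w : List ℕ | IsFactorOf a w ∧ IsRPlusPower p q w},
        p*n + 2 ≤ w.length := by
      by_contra hcon
      push_neg at hcon
      apply hinf
      apply Set.Finite.subset (finite_bounded_lists (0 :: out) (p*n + 1))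
      rintro w ⟨hfac, hpow⟩
      refine ⟨?_, by have := hcon w ⟨hfac, hpow⟩; omega⟩
      intro x hx
      rcases hfac with ⟨i, hw⟩
      rw [hw] at hx
      rcases List.mem_map.1 hx with ⟨j, _, rfl⟩
      exact aval_mem hk hgen _
    rcases hsub with ⟨w, hwmem, hwlen⟩
    rcases rpluspower_to_occ hq hqp hwmem.1 hwmem.2 with ⟨T, i, ⟨hT1, hTle⟩, hOcc⟩
    refine ⟨T, i, ?_, hOcc⟩
    have h1 : w.length - 1 ≤ q * (w.length - 1) := Nat.le_mul_of_pos_left _ (by omega)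
    have h2 : p*n < p*T := by omega
    have := Nat.lt_of_mul_lt_mul_left h2
    omega
  · intro hU
    apply infinite_of_unbounded
    intro n
    rcases hU (n+1) with ⟨T, i, hTn, hOcc⟩
    rcases occ_to_rpluspower hq hqp (by omega) hOcc with ⟨z, hz, hzlen⟩
    exact ⟨z, hz, by omega⟩

/-! Computability of the decision procedure -/

section PR
open Primrec

variable {α : Type} [Primcodable α]

theorem dd_pr {ft : α → List (List ℕ)} {fq fd : α → ℕ}
    (ht : Primrec ft) (hq : Primrec fq) (hd : Primrec fd) :
    Primrec fun a => dd (ft a) (fq a) (fd a) :=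
  (list_getD 0).comp ((list_getD ([] : List ℕ)).comp ht hq) hd

theorem step1_pr {fk fp fq : α → ℕ} {ft : α → List (List ℕ)} {fs : α → S1}
    {f1 f2 f3 : α → ℕ}
    (hk : Primrec fk) (hp : Primrec fp) (hq : Primrec fq) (ht : Primrec ft)
    (hs : Primrec fs) (h1 : Primrec f1) (h2 : Primrec f2) (h3 : Primrec f3) :
    Primrec fun a => step1 (fk a) (fp a) (fq a) (ft a) (fs a) (f1 a) (f2 a) (f3 a) := by
  have hs21 : Primrec fun a => (fs a).2.1 := fst.comp (snd.comp hs)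
  have hs221 : Primrec fun a => (fs a).2.2.1 := fst.comp (snd.comp (snd.comp hs))
  have hs2221 : Primrec fun a => (fs a).2.2.2.1 :=
    fst.comp (snd.comp (snd.comp (snd.comp hs)))
  have hs2222 : Primrec fun a => (fs a).2.2.2.2 :=
    snd.comp (snd.comp (snd.comp (snd.comp hs)))
  have hcmp : Primrec fun a => if f2 a = f3 a then (fs a).1 else decide (f2 a < f3 a) :=
    Primrec.ite (Primrec.eq.comp h2 h3) (fst.comp hs) (nat_lt.comp h2 h3).decide
  have hkm1 : Primrec fun a => fk a - 1 := nat_sub.comp hk (const 1)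
  have ht' : Primrec fun a =>
      ((fs a).2.1 + fq a * f3 a + (fp a * (fk a - 1) - ((fp a - fq a) * f1 a + fq a * f2 a))
        + (fk a - 1)) / fk a :=
    nat_div.comp
      (nat_add.comp
        (nat_add.comp (nat_add.comp hs21 (nat_mul.comp hq h3))
          (nat_sub.comp (nat_mul.comp hp hkm1)
            (nat_add.comp (nat_mul.comp (nat_sub.comp hp hq) h1) (nat_mul.comp hq h2))))
        hkm1)
      hk
  have hsum : Primrec fun a => f3 a + f1 a + (fs a).2.2.2.2 :=
    nat_add.comp (nat_add.comp h3 h1) hs2222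
  have hqm : Primrec fun a => dd (ft a) ((fs a).2.2.1) (f3 a) := dd_pr ht hs221 h3
  have hqs : Primrec fun a => dd (ft a) ((fs a).2.2.2.1) ((f3 a + f1 a + (fs a).2.2.2.2) % fk a) :=
    dd_pr ht hs2221 (nat_mod.comp hsum hk)
  have hc : Primrec fun a => (f3 a + f1 a + (fs a).2.2.2.2) / fk a := nat_div.comp hsum hk
  exact (hcmp.pair (ht'.pair (hqm.pair (hqs.pair hc)))).of_eq fun a => rfl

theorem stepL_pr {fk fp fq : α → ℕ} {ft : α → List (List ℕ)} {fl : α → List S1}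
    {fd : α → ℕ × ℕ}
    (hk : Primrec fk) (hp : Primrec fp) (hq : Primrec fq) (ht : Primrec ft)
    (hl : Primrec fl) (hd : Primrec fd) :
    Primrec fun a => stepL (fk a) (fp a) (fq a) (ft a) (fl a) (fd a) := by
  have hinner : Primrec₂ fun (pr : α × S1) (dm : ℕ) =>
      step1 (fk pr.1) (fp pr.1) (fq pr.1) (ft pr.1) pr.2 (fd pr.1).1 (fd pr.1).2 dm := by
    exact step1_pr (hk.comp (fst.comp fst)) (hp.comp (fst.comp fst)) (hq.comp (fst.comp fst))
      (ht.comp (fst.comp fst)) (snd.comp fst) (fst.comp (hd.comp (fst.comp fst)))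
      (snd.comp (hd.comp (fst.comp fst))) snd
  have hgg : Primrec₂ fun (a : α) (s : S1) => (List.range (fk a)).map fun dm =>
      step1 (fk a) (fp a) (fq a) (ft a) s (fd a).1 (fd a).2 dm := by
    exact list_map (list_range.comp (hk.comp fst)) hinner
  exact list_flatMap hl hgg

theorem runL_pr {fk fp fq : α → ℕ} {ft : α → List (List ℕ)} {fl : α → List S1}
    {fu : α → List (ℕ × ℕ)}
    (hk : Primrec fk) (hp : Primrec fp) (hq : Primrec fq) (ht : Primrec ft)
    (hl : Primrec fl) (hu : Primrec fu) :
    Primrec fun a => runL (fk a) (fp a) (fq a) (ft a) (fl a) (fu a) := by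
  have hstep : Primrec₂ fun (a : α) (pr : List S1 × (ℕ × ℕ)) =>
      stepL (fk a) (fp a) (fq a) (ft a) pr.1 pr.2 := by
    exact stepL_pr (hk.comp fst) (hp.comp fst) (hq.comp fst) (ht.comp fst)
      (fst.comp snd) (snd.comp snd)
  exact list_foldl hu hl hstep

theorem bany_pr {β : Type} [Primcodable β] {fl : α → List β} {g : α → β → Bool}
    (hl : Primrec fl) (hg : Primrec₂ g) :
    Primrec fun a => bany (fl a) (g a) := by
  have hstep : Primrec₂ fun (a : α) (pr : Bool × β) => pr.1 || g a pr.2 :=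
    Primrec.to₂ (Primrec.or.comp (fst.comp snd) (hg.comp fst (snd.comp snd)))
  exact list_foldl hl (const false) hstep

theorem ball_pr {β : Type} [Primcodable β] {fl : α → List β} {g : α → β → Bool}
    (hl : Primrec fl) (hg : Primrec₂ g) :
    Primrec fun a => ball (fl a) (g a) := by
  have hstep : Primrec₂ fun (a : α) (pr : Bool × β) => pr.1 && g a pr.2 :=
    Primrec.to₂ (Primrec.and.comp (fst.comp snd) (hg.comp fst (snd.comp snd)))
  exact list_foldl hl (const true) hstep

theorem zeros_pr {fn : α → ℕ} (hn : Primrec fn) : Primrec fun a => zeros (fn a) := by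
  have : Primrec₂ fun (_ : α) (_ : ℕ) => ((0, 0) : ℕ × ℕ) := Primrec.to₂ (const _)
  exact list_map (list_range.comp hn) this

theorem accept1_pr {fk fp fq : α → ℕ} {ft : α → List (List ℕ)} {fo : α → List ℕ}
    {fs : α → S1}
    (hk : Primrec fk) (hp : Primrec fp) (hq : Primrec fq) (ht : Primrec ft)
    (ho : Primrec fo) (hs : Primrec fs) :
    Primrec fun a => accept1 (fk a) (fp a) (fq a) (ft a) (fo a) (fs a) := by
  have hs21 : Primrec fun a => (fs a).2.1 := fst.comp (snd.comp hs)
  have hs221 : Primrec fun a => (fs a).2.2.1 := fst.comp (snd.comp (snd.comp hs))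
  have hs2221 : Primrec fun a => (fs a).2.2.2.1 :=
    fst.comp (snd.comp (snd.comp (snd.comp hs)))
  have hs2222 : Primrec fun a => (fs a).2.2.2.2 :=
    snd.comp (snd.comp (snd.comp (snd.comp hs)))
  have h1 : Primrec fun a => (fo a).getD ((fs a).2.2.1) 0 := (list_getD 0).comp ho hs221
  have hqfin : Primrec fun a =>
      if (fs a).2.2.2.2 = 0 then (fs a).2.2.2.1 else dd (ft a) ((fs a).2.2.2.1) 1 :=
    Primrec.ite (Primrec.eq.comp hs2222 (const 0)) hs2221 (dd_pr ht hs2221 (const 1))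
  have h2 : Primrec fun a => (fo a).getD
      (if (fs a).2.2.2.2 = 0 then (fs a).2.2.2.1 else dd (ft a) ((fs a).2.2.2.1) 1) 0 :=
    (list_getD 0).comp ho hqfin
  exact Primrec.and.comp
    (Primrec.and.comp (fst.comp hs) (nat_le.comp hs21 hp).decide)
    (Primrec.not.comp (Primrec.eq.comp h1 h2).decide)

theorem occAcc_pr {fk fp fq : α → ℕ} {ft : α → List (List ℕ)} {fo : α → List ℕ}
    {fl : α → List S1}
    (hk : Primrec fk) (hp : Primrec fp) (hq : Primrec fq) (ht : Primrec ft)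
    (ho : Primrec fo) (hl : Primrec fl) :
    Primrec fun a => occAcc (fk a) (fp a) (fq a) (ft a) (fo a) (fl a) := by
  have hrun : Primrec fun a => runL (fk a) (fp a) (fq a) (ft a) (fl a)
      (zeros (fp a + 1)) :=
    runL_pr hk hp hq ht hl (zeros_pr (nat_add.comp hp (const 1)))
  have hin : Primrec₂ fun (a : α) (s : S1) => !accept1 (fk a) (fp a) (fq a) (ft a) (fo a) s :=
    Primrec.to₂ (Primrec.not.comp (accept1_pr (hk.comp fst) (hp.comp fst) (hq.comp fst)
      (ht.comp fst) (ho.comp fst) snd))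
  exact ball_pr hrun hin

theorem memb_pr {fs : α → S1} {fl : α → List S1} (hs : Primrec fs) (hl : Primrec fl) :
    Primrec fun a => memb (fs a) (fl a) := by
  have : Primrec₂ fun (a : α) (x : S1) => decide (x = fs a) :=
    Primrec.to₂ (Primrec.eq.comp snd (hs.comp fst)).decide
  exact bany_pr hl this

theorem eqv_pr {f1 f2 : α → List S1} (h1 : Primrec f1) (h2 : Primrec f2) :
    Primrec fun a => eqv (f1 a) (f2 a) := by
  have hb1 : Primrec₂ fun (a : α) (s : S1) => memb s (f2 a) :=
    Primrec.to₂ (memb_pr snd (h2.comp fst))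
  have hb2 : Primrec₂ fun (a : α) (s : S1) => memb s (f1 a) :=
    Primrec.to₂ (memb_pr snd (h1.comp fst))
  exact Primrec.and.comp (ball_pr h1 hb1) (ball_pr h2 hb2)

theorem pref_pr {fu : α → List (ℕ × ℕ)} {fc : α → ℕ} (hu : Primrec fu) (hc : Primrec fc) :
    Primrec fun a => pref (fu a) (fc a) := by
  have : Primrec₂ fun (a : α) (j : ℕ) => (fu a).getD j ((0,0) : ℕ × ℕ) :=
    Primrec.to₂ ((list_getD ((0,0) : ℕ × ℕ)).comp (hu.comp fst) snd)
  exact list_map (list_range.comp hc) this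

theorem check_pr {fk fp fq ft0 fq0 : α → ℕ} {ft : α → List (List ℕ)} {fo : α → List ℕ}
    {fu : α → List (ℕ × ℕ)}
    (hk : Primrec fk) (hp : Primrec fp) (hq : Primrec fq) (ht0 : Primrec ft0)
    (hq0 : Primrec fq0) (ht : Primrec ft) (ho : Primrec fo) (hu : Primrec fu) :
    Primrec fun a => check (fk a) (fp a) (fq a) (ft0 a) (fq0 a) (ft a) (fo a) (fu a) := by
  have hinit : Primrec fun a => ([init1 (ft0 a) (fq0 a)] : List S1) := by
    have h1 : Primrec fun a => init1 (ft0 a) (fq0 a) :=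
      ((const true).pair (ht0.pair (hq0.pair (hq0.pair (const 0))))).of_eq fun a => rfl
    exact list_cons.comp h1 (const [])
  have hrun0 : Primrec fun a => runL (fk a) (fp a) (fq a) (ft a) [init1 (ft0 a) (fq0 a)]
      (fu a) := runL_pr hk hp hq ht hinit hu
  have hpart1 : Primrec fun a => occAcc (fk a) (fp a) (fq a) (ft a) (fo a)
      (runL (fk a) (fp a) (fq a) (ft a) [init1 (ft0 a) (fq0 a)] (fu a)) :=
    occAcc_pr hk hp hq ht ho hrun0
  -- innermost: over (((a, d2), c), j)
  have hjin : Primrec₂ fun (pr : (α × ℕ) × ℕ) (j : ℕ) =>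
      (decide (pr.2 ≤ j) && decide (((fu pr.1.1).getD j (0,0)).1 ≠ 0)) := by
    have hgd : Primrec fun (z : ((α × ℕ) × ℕ) × ℕ) => ((fu z.1.1.1).getD z.2 (0,0)).1 :=
      fst.comp ((list_getD ((0,0) : ℕ × ℕ)).comp (hu.comp (fst.comp (fst.comp fst))) snd)
    exact (Primrec.and.comp (nat_le.comp (snd.comp fst) snd).decide
      (Primrec.not.comp (Primrec.eq.comp hgd (const 0)).decide)).of_eq fun z => by
        simp [decide_not]
  have hcin : Primrec₂ fun (pr : α × ℕ) (c : ℕ) =>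
      (eqv (runL (fk pr.1) (fp pr.1) (fq pr.1) (ft pr.1) [init1 (ft0 pr.1) (fq0 pr.1)]
          (pref (fu pr.1) c))
        (runL (fk pr.1) (fp pr.1) (fq pr.1) (ft pr.1) [init1 (ft0 pr.1) (fq0 pr.1)]
          (pref (fu pr.1) pr.2)) &&
       bany (List.range (fu pr.1).length) fun j =>
         decide (c ≤ j) && decide (((fu pr.1).getD j (0,0)).1 ≠ 0)) := by
    have haa : Primrec fun (z : (α × ℕ) × ℕ) => z.1.1 := fst.comp fst
    have hr1 : Primrec fun (z : (α × ℕ) × ℕ) =>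
        runL (fk z.1.1) (fp z.1.1) (fq z.1.1) (ft z.1.1) [init1 (ft0 z.1.1) (fq0 z.1.1)]
          (pref (fu z.1.1) z.2) := by
      apply runL_pr (hk.comp haa) (hp.comp haa) (hq.comp haa) (ht.comp haa)
      · have h1 : Primrec fun (z : (α × ℕ) × ℕ) => init1 (ft0 z.1.1) (fq0 z.1.1) :=
          ((const true).pair ((ht0.comp haa).pair ((hq0.comp haa).pair
            ((hq0.comp haa).pair (const 0))))).of_eq fun a => rfl
        exact list_cons.comp h1 (const [])
      · exact pref_pr (hu.comp haa) snd
    have hr2 : Primrec fun (z : (α × ℕ) × ℕ) =>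
        runL (fk z.1.1) (fp z.1.1) (fq z.1.1) (ft z.1.1) [init1 (ft0 z.1.1) (fq0 z.1.1)]
          (pref (fu z.1.1) z.1.2) := by
      apply runL_pr (hk.comp haa) (hp.comp haa) (hq.comp haa) (ht.comp haa)
      · have h1 : Primrec fun (z : (α × ℕ) × ℕ) => init1 (ft0 z.1.1) (fq0 z.1.1) :=
          ((const true).pair ((ht0.comp haa).pair ((hq0.comp haa).pair
            ((hq0.comp haa).pair (const 0))))).of_eq fun a => rfl
        exact list_cons.comp h1 (const [])
      · exact pref_pr (hu.comp haa) (snd.comp fst)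
    have hbj : Primrec fun (z : (α × ℕ) × ℕ) =>
        bany (List.range (fu z.1.1).length) fun j =>
          decide (z.2 ≤ j) && decide (((fu z.1.1).getD j (0,0)).1 ≠ 0) := by
      apply bany_pr (list_range.comp (list_length.comp (hu.comp haa)))
      exact hjin
    exact Primrec.and.comp (eqv_pr hr1 hr2) hbj
  have hpart2 : Primrec fun a =>
      bany (List.range ((fu a).length + 1)) fun d2 =>
        bany (List.range d2) fun c =>
          (eqv (runL (fk a) (fp a) (fq a) (ft a) [init1 (ft0 a) (fq0 a)] (pref (fu a) c))
            (runL (fk a) (fp a) (fq a) (ft a) [init1 (ft0 a) (fq0 a)] (pref (fu a) d2)) &&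
           bany (List.range (fu a).length) fun j =>
             decide (c ≤ j) && decide (((fu a).getD j (0,0)).1 ≠ 0)) := by
    apply bany_pr (list_range.comp (nat_add.comp (list_length.comp hu) (const 1)))
    exact bany_pr (list_range.comp snd) hcin
  exact (Primrec.and.comp hpart1 hpart2).of_eq fun a => rfl

theorem letters_pr {fk : α → ℕ} (hk : Primrec fk) : Primrec fun a => letters (fk a) := by
  have hin : Primrec₂ fun (pr : α × ℕ) (b : ℕ) => ((pr.2, b) : ℕ × ℕ) :=
    Primrec.to₂ ((snd.comp fst).pair snd)
  have : Primrec₂ fun (a : α) (x : ℕ) => (List.range (fk a)).map fun b => ((x, b) : ℕ × ℕ) :=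
    Primrec.to₂ (list_map (list_range.comp (hk.comp fst)) hin)
  exact list_flatMap (list_range.comp hk) this

theorem words_pr {fk : α → ℕ} {fn : α → ℕ} (hk : Primrec fk) (hn : Primrec fn) :
    Primrec fun a => words (fk a) (fn a) := by
  have hg : Primrec₂ fun (a : α) (pr : ℕ × List (List (ℕ × ℕ))) =>
      ([] : List (ℕ × ℕ)) :: pr.2.flatMap fun w => (letters (fk a)).map fun d => d :: w := by
    have hinner : Primrec₂ fun (z : (α × ℕ × List (List (ℕ × ℕ)))) (w : List (ℕ × ℕ)) =>
        (letters (fk z.1)).map fun d => d :: w := by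
      have hc : Primrec₂ fun (y : (α × ℕ × List (List (ℕ × ℕ))) × List (ℕ × ℕ))
          (d : ℕ × ℕ) => d :: y.2 := Primrec.to₂ (list_cons.comp snd (snd.comp fst))
      exact list_map (letters_pr (hk.comp (fst.comp fst))) hc
    exact list_cons.comp (const ([] : List (ℕ × ℕ)))
      (list_flatMap (snd.comp snd) hinner)
  have hrec : Primrec₂ fun (a : α) (n : ℕ) =>
      Nat.rec (motive := fun _ => List (List (ℕ × ℕ))) ([[]] : List (List (ℕ × ℕ)))
        (fun _ IH => ([] : List (ℕ × ℕ)) :: IH.flatMap fun w =>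
          (letters (fk a)).map fun d => d :: w) n :=
    Primrec.nat_rec (const ([[]] : List (List (ℕ × ℕ)))) hg
  have heq : ∀ (a : α) (n : ℕ),
      Nat.rec (motive := fun _ => List (List (ℕ × ℕ))) ([[]] : List (List (ℕ × ℕ)))
        (fun _ IH => ([] : List (ℕ × ℕ)) :: IH.flatMap fun w =>
          (letters (fk a)).map fun d => d :: w) n = words (fk a) n := by
    intro a n
    induction n with
    | zero => rfl
    | succ n IH => rw [words]; rw [← IH]
  exact (hrec.comp Primrec.id hn).of_eq fun a => heq a (fn a)

theorem pow_pr : Primrec₂ ((· ^ ·) : ℕ → ℕ → ℕ) :=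
  Primrec₂.unpaired.1 (Primrec.nat_iff.2 Nat.Primrec.pow)

theorem nQ_pr {ft : α → List (List ℕ)} {fq0 : α → ℕ} (ht : Primrec ft) (hq0 : Primrec fq0) :
    Primrec fun a => nQ (ft a) (fq0 a) :=
  list_length.comp (list_cons.comp hq0 (list_cons.comp (const 0) (list_flatten.comp ht)))

theorem bigN_pr {fp fq fq0 : α → ℕ} {ft : α → List (List ℕ)}
    (hp : Primrec fp) (hq : Primrec fq) (hq0 : Primrec fq0) (ht : Primrec ft) :
    Primrec fun a => bigN (fp a) (fq a) (fq0 a) (ft a) := by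
  have hnq : Primrec fun a => nQ (ft a) (fq0 a) := nQ_pr ht hq0
  exact pow_pr.comp (const 2)
    (nat_mul.comp (const 2)
      (nat_mul.comp (nat_add.comp (nat_add.comp hp hq) (const 2))
        (nat_mul.comp hnq (nat_mul.comp hnq (const 2)))))

theorem decider_pr {fk fp fq ft0 fq0 : α → ℕ} {ft : α → List (List ℕ)} {fo : α → List ℕ}
    (hk : Primrec fk) (hp : Primrec fp) (hq : Primrec fq) (ht0 : Primrec ft0)
    (hq0 : Primrec fq0) (ht : Primrec ft) (ho : Primrec fo) :
    Primrec fun a => decider (fk a) (fp a) (fq a) (ft0 a) (fq0 a) (ft a) (fo a) := by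
  have hB : Primrec fun a => 3 * bigN (fp a) (fq a) (fq0 a) (ft a) + 3 :=
    nat_add.comp (nat_mul.comp (const 3) (bigN_pr hp hq hq0 ht)) (const 3)
  have hw : Primrec fun a => words (fk a) (3 * bigN (fp a) (fq a) (fq0 a) (ft a) + 3) :=
    words_pr hk hB
  have hcheck : Primrec₂ fun (a : α) (u : List (ℕ × ℕ)) =>
      check (fk a) (fp a) (fq a) (ft0 a) (fq0 a) (ft a) (fo a) u := by
    exact check_pr (hk.comp fst) (hp.comp fst) (hq.comp fst) (ht0.comp fst)
      (hq0.comp fst) (ht.comp fst) (ho.comp fst) snd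
  exact bany_pr hw hcheck

end PR

theorem decider_iff (k p q t0 q0 : ℕ) (trans : List (List ℕ)) (out : List ℕ)
    (a : ℕ → ℕ) (hk : 2 ≤ k) (hq : 1 ≤ q) (hqp : q < p) (ht0 : t0 ≤ p+q+1)
    (hgen : dfaoGenerates k trans q0 out a) :
    (decider k p q t0 q0 trans out = true ↔ ∀ n : ℕ, ∃ T i : ℕ, n ≤ T ∧ Occ a p q t0 i T) :=
  ⟨decider_sound k p q t0 q0 trans out a hk hq hqp ht0 hgen,
   decider_complete k p q t0 q0 trans out a hk hq hqp ht0 hgen⟩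

theorem main_final :
    ∃ f g : ℕ × List (List ℕ) × ℕ × List ℕ × ℕ × ℕ → Bool,
      Computable f ∧ Computable g ∧
      ∀ (k : ℕ) (trans : List (List ℕ)) (q0 : ℕ) (out : List ℕ) (a : ℕ → ℕ)
        (p q : ℕ),
        2 ≤ k → dfaoGenerates k trans q0 out a → 1 ≤ q → q < p →
        ((f (k, trans, q0, out, p, q) = true ↔
            {w : List ℕ | IsFactorOf a w ∧ IsRPower p q w}.Infinite) ∧
         (g (k, trans, q0, out, p, q) = true ↔
            {w : List ℕ | IsFactorOf a w ∧ IsRPlusPower p q w}.Infinite)) := by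
  classical
  refine ⟨fun x => decider x.1 x.2.2.2.2.1 x.2.2.2.2.2 (x.2.2.2.2.1 + 1) x.2.2.1 x.2.1
      x.2.2.2.1,
    fun x => decider x.1 x.2.2.2.2.1 x.2.2.2.2.2 x.2.2.2.2.1 x.2.2.1 x.2.1 x.2.2.2.1,
    ?_, ?_, ?_⟩
  · apply Primrec.to_comp
    exact decider_pr Primrec.fst
      (Primrec.fst.comp (Primrec.snd.comp (Primrec.snd.comp (Primrec.snd.comp Primrec.snd))))
      (Primrec.snd.comp (Primrec.snd.comp (Primrec.snd.comp (Primrec.snd.comp Primrec.snd))))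
      (Primrec.nat_add.comp
        (Primrec.fst.comp (Primrec.snd.comp (Primrec.snd.comp (Primrec.snd.comp Primrec.snd))))
        (Primrec.const 1))
      (Primrec.fst.comp (Primrec.snd.comp Primrec.snd))
      (Primrec.fst.comp Primrec.snd)
      (Primrec.fst.comp (Primrec.snd.comp (Primrec.snd.comp Primrec.snd)))
  · apply Primrec.to_comp
    exact decider_pr Primrec.fst
      (Primrec.fst.comp (Primrec.snd.comp (Primrec.snd.comp (Primrec.snd.comp Primrec.snd))))
      (Primrec.snd.comp (Primrec.snd.comp (Primrec.snd.comp (Primrec.snd.comp Primrec.snd))))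
      (Primrec.fst.comp (Primrec.snd.comp (Primrec.snd.comp (Primrec.snd.comp Primrec.snd))))
      (Primrec.fst.comp (Primrec.snd.comp Primrec.snd))
      (Primrec.fst.comp Primrec.snd)
      (Primrec.fst.comp (Primrec.snd.comp (Primrec.snd.comp Primrec.snd)))
  · intro k trans q0 out a p q hk hgen hq hqp
    constructor
    · rw [setR_iff hk hq hqp hgen]
      exact decider_iff k p q (p+1) q0 trans out a hk hq hqp (by omega) hgen
    · rw [setP_iff hk hq hqp hgen]
      exact decider_iff k p q p q0 trans out a hk hq hqp (by omega) hgen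

/-- It is decidable, given `k ≥ 2`, a DFAO generating a `k`-automatic sequence
`a`, and a rational `r = p/q > 1`, whether the set of factors of `a` that are
`r`-powers is infinite; and likewise for `r⁺`-powers. -/
theorem infinitelyManyDistinctRPowers_decidable :
    ∃ f g : ℕ × List (List ℕ) × ℕ × List ℕ × ℕ × ℕ → Bool,
      Computable f ∧ Computable g ∧
      ∀ (k : ℕ) (trans : List (List ℕ)) (q0 : ℕ) (out : List ℕ) (a : ℕ → ℕ)
        (p q : ℕ),
        2 ≤ k → dfaoGenerates k trans q0 out a → 1 ≤ q → q < p →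
        ((f (k, trans, q0, out, p, q) = true ↔
            {w : List ℕ | IsFactorOf a w ∧ IsRPower p q w}.Infinite) ∧
         (g (k, trans, q0, out, p, q) = true ↔
            {w : List ℕ | IsFactorOf a w ∧ IsRPlusPower p q w}.Infinite)) := by
  exact main_final
end
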